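/- arXiv:1801.02061 — 7 statements merged into one kernel-verified Lean document; each statement's English description precedes it below -/
import Mathlib

section
/- For all integers N ≥ 1 and K > N and every demand d : [K] → [N], the generalized independence number and the min-rank of the induced generalized index coding problem coincide: α(d) = κ(d), and this common value equals NK·N_e(d) if N_e(d) ≤ N−1, and equals N²(K−1) if N_e(d) = N. -/
open Matrix

/-- Number of distinct demands `N_e(d)`. -/
def numDistinct {K N : ℕ} (d : Fin K → Fin N) : ℕ := (Finset.univ.image d).card

/-- The set `Z^{(i,m)}(d)` for the GIC problem induced by CFL prefetching (`K > N`):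
receiver `(i,m)` knows the `N` coded packets `∑_a Z(a,(i,j))`, `j ∈ [N]`, and demands
`Z(d(i), m)`. -/
def Zset (F : Type*) [Field F] {N K : ℕ} (d : Fin K → Fin N)
    (i : Fin K) (m : Fin K × Fin N) :
    Set (Matrix (Fin N) (Fin K × Fin N) F) :=
  {Z | (∀ j, ∑ a, Z a (i, j) = 0) ∧ Z (d i) m ≠ 0}

/-- Generalized independence number `α(d)`: the maximum dimension of a subspace
all of whose nonzero elements lie in `⋃_{i,m} Z^{(i,m)}(d)`. -/
noncomputable def alphaCFL (F : Type*) [Field F] {N K : ℕ} (d : Fin K → Fin N) : ℕ :=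
  sSup { k | ∃ U : Submodule F (Matrix (Fin N) (Fin K × Fin N) F),
    (∀ x ∈ U, x ≠ 0 → x ∈ ⋃ i, ⋃ m, Zset F d i m) ∧ Module.finrank F U = k }

/-- The matrix `v_{i,j}` whose `(a,(k,l))` entry is `1` iff `(k,l) = (i,j)`. -/
def vmat (F : Type*) [Field F] {N K : ℕ} (i : Fin K) (j : Fin N) :
    Matrix (Fin N) (Fin K × Fin N) F :=
  fun _ p => if p = (i, j) then 1 else 0

/-- Min-rank `κ(d)`: the minimum over all coefficient choices `c` of the dimension of
the span of the matrices `E_{d(i),m} + ∑_j c_j·v_{i,j}`. -/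
noncomputable def kappaCFL (F : Type*) [Field F] {N K : ℕ} (d : Fin K → Fin N) : ℕ :=
  sInf { k | ∃ c : Fin K × (Fin K × Fin N) → Fin N → F,
    Module.finrank F (Submodule.span F
      (Set.range fun p : Fin K × (Fin K × Fin N) =>
        Matrix.single (d p.1) p.2 (1 : F) + ∑ j, c p j • vmat F p.1 j)) = k }

section Aux

open Module Submodule

variable (F : Type*) [Field F] {N K : ℕ}

/-- The generator matrices of the min-rank problem. -/
noncomputable def Bfun (d : Fin K → Fin N) (c : Fin K × (Fin K × Fin N) → Fin N → F)
    (p : Fin K × (Fin K × Fin N)) : Matrix (Fin N) (Fin K × Fin N) F :=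
  Matrix.single (d p.1) p.2 (1 : F) + ∑ j, c p j • vmat F p.1 j

lemma Bfun_apply (d : Fin K → Fin N) (c : Fin K × (Fin K × Fin N) → Fin N → F)
    (p : Fin K × (Fin K × Fin N)) (a : Fin N) (m : Fin K × Fin N) :
    Bfun F d c p a m =
      (if d p.1 = a ∧ p.2 = m then 1 else 0)
        + ∑ j, c p j * (if m = (p.1, j) then 1 else 0) := by
  simp [Bfun, Matrix.add_apply, Matrix.sum_apply, Matrix.single, vmat,
    Matrix.smul_apply, smul_eq_mul]

/-- The trace pairing on the message space. -/
noncomputable def pairL : Matrix (Fin N) (Fin K × Fin N) F →ₗ[F]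
    Matrix (Fin N) (Fin K × Fin N) F →ₗ[F] F :=
  LinearMap.mk₂ F (fun Z A => ∑ a, ∑ m, Z a m * A a m)
    (fun Z Z' A => by
      simp [Matrix.add_apply, add_mul, Finset.sum_add_distrib])
    (fun r Z A => by
      simp [Matrix.smul_apply, smul_eq_mul, mul_assoc, Finset.mul_sum])
    (fun Z A A' => by
      simp [Matrix.add_apply, mul_add, Finset.sum_add_distrib])
    (fun r Z A => by
      simp [Matrix.smul_apply, smul_eq_mul, Finset.mul_sum, mul_left_comm])

lemma pairL_apply (Z A : Matrix (Fin N) (Fin K × Fin N) F) :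
    pairL F Z A = ∑ a, ∑ m, Z a m * A a m := rfl

lemma pair_Bfun (d : Fin K → Fin N) (c : Fin K × (Fin K × Fin N) → Fin N → F)
    (i : Fin K) (m : Fin K × Fin N) (Z : Matrix (Fin N) (Fin K × Fin N) F)
    (hs : ∀ j, ∑ a, Z a (i, j) = 0) :
    pairL F Z (Bfun F d c (i, m)) = Z (d i) m := by
  have hrow : ∀ a : Fin N, ∑ m', Z a m' * Bfun F d c (i, m) a m' =
      (if d i = a then Z a m else 0) + ∑ j, c (i, m) j * Z a (i, j) := by
    intro a
    have h1 : ∀ m' : Fin K × Fin N, Z a m' * Bfun F d c (i, m) a m' =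
        (if d i = a then (if m = m' then Z a m' else 0) else 0)
          + ∑ j, (if m' = (i, j) then c (i, m) j * Z a m' else 0) := by
      intro m'
      rw [Bfun_apply, mul_add, Finset.mul_sum]
      congr 1
      · by_cases hda : d i = a <;> by_cases hm : m = m' <;> simp [hda, hm]
      · refine Finset.sum_congr rfl fun j _ => ?_
        by_cases h : m' = (i, j) <;> simp [h, mul_comm]
    simp only [h1, Finset.sum_add_distrib]
    congr 1
    · by_cases hda : d i = a <;> simp [hda, Finset.sum_ite_eq]
    · rw [Finset.sum_comm]
      refine Finset.sum_congr rfl fun j _ => ?_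
      simp [Finset.sum_ite_eq']
  rw [pairL_apply]
  simp only [hrow, Finset.sum_add_distrib]
  have h2 : ∑ a, (if d i = a then Z a m else 0) = Z (d i) m := by
    simp [Finset.sum_ite_eq]
  have h3 : (∑ a, ∑ j, c (i, m) j * Z a (i, j)) = 0 := by
    rw [Finset.sum_comm]
    simp only [← Finset.mul_sum, hs, mul_zero, Finset.sum_const_zero]
  rw [h2, h3, add_zero]

/-- `α`-type subspaces have dimension at most the dimension of the span of any
family of generator matrices. -/
lemma finrank_le_span_Bfun (d : Fin K → Fin N)
    (c : Fin K × (Fin K × Fin N) → Fin N → F)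
    (U : Submodule F (Matrix (Fin N) (Fin K × Fin N) F))
    (hU : ∀ x ∈ U, x ≠ 0 → x ∈ ⋃ i, ⋃ m, Zset F d i m) :
    Module.finrank F U ≤
      Module.finrank F (Submodule.span F (Set.range (Bfun F d c))) := by
  classical
  set W : Submodule F (Matrix (Fin N) (Fin K × Fin N) F) :=
    Submodule.span F (Set.range (Bfun F d c)) with hW
  let g : Matrix (Fin N) (Fin K × Fin N) F →ₗ[F] (W →ₗ[F] F) :=
    ((pairL F).flip.domRestrict W).flip
  let e : (W →ₗ[F] F) →ₗ[F] (Fin K × (Fin K × Fin N) → F) :=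
    LinearMap.pi fun p =>
      LinearMap.applyₗ (⟨Bfun F d c p, Submodule.subset_span (Set.mem_range_self p)⟩ : W)
  let ψ := e.comp g
  have hψ : ∀ Z p, ψ Z p = pairL F Z (Bfun F d c p) := fun Z p => rfl
  have hdisj : Disjoint U (LinearMap.ker ψ) := by
    rw [Submodule.disjoint_def]
    intro x hxU hxk
    by_contra hx0
    obtain ⟨i, hmem⟩ := Set.mem_iUnion.mp (hU x hxU hx0)
    obtain ⟨m, hmem'⟩ := Set.mem_iUnion.mp hmem
    have h0 : ψ x (i, m) = 0 := by rw [LinearMap.mem_ker.mp hxk]; rfl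
    rw [hψ, pair_Bfun F d c i m x hmem'.1] at h0
    exact hmem'.2 h0
  have h1 : Module.finrank F U + Module.finrank F (LinearMap.ker ψ) ≤
      Module.finrank F (Matrix (Fin N) (Fin K × Fin N) F) :=
    Submodule.finrank_add_finrank_le_of_disjoint hdisj
  have h2 := LinearMap.finrank_range_add_finrank_ker ψ
  have h3 : Module.finrank F (LinearMap.range ψ) ≤ Module.finrank F W := by
    calc Module.finrank F (LinearMap.range ψ)
        ≤ Module.finrank F (LinearMap.range e) :=
          Submodule.finrank_mono (LinearMap.range_comp_le_range g e)
      _ ≤ Module.finrank F (W →ₗ[F] F) := LinearMap.finrank_range_le e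
      _ = Module.finrank F W := Subspace.dual_finrank_eq
  omega

/-- The linear map whose kernel is the independent subspace in the case `N_e(d) = N`. -/
noncomputable def phi2 (σ : Fin N → Fin K) :
    Matrix (Fin N) (Fin K × Fin N) F →ₗ[F] (Fin N × Fin N → F) where
  toFun Z := fun q => ∑ a, Z a (σ q.1, q.2)
  map_add' Z Z' := by
    funext q; simp [Matrix.add_apply, Finset.sum_add_distrib]
  map_smul' r Z := by
    funext q; simp [Matrix.smul_apply, smul_eq_mul, Finset.mul_sum]

lemma phi2_surj (σ : Fin N → Fin K) (hσ : Function.Injective σ) :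
    Function.Surjective (phi2 F σ) := by
  intro w
  refine ⟨fun a q => if q.1 = σ a then w (a, q.2) else 0, ?_⟩
  funext q
  show (∑ a, if σ q.1 = σ a then w (a, q.2) else 0) = w q
  have h : ∀ a, (if σ q.1 = σ a then w (a, q.2) else 0)
      = (if q.1 = a then w (a, q.2) else 0) := fun a => by
    by_cases h : q.1 = a
    · simp [h]
    · simp only [if_neg h, if_neg (fun hh => h (hσ hh))]
  rw [Finset.sum_congr rfl fun a _ => h a, Finset.sum_ite_eq]
  simp

lemma exists_U2 (d : Fin K → Fin N) (σ : Fin N → Fin K) (hσd : ∀ b, d (σ b) = b) :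
    ∃ U : Submodule F (Matrix (Fin N) (Fin K × Fin N) F),
      (∀ x ∈ U, x ≠ 0 → x ∈ ⋃ i, ⋃ m, Zset F d i m) ∧
      Module.finrank F U = N * (K * N) - N * N := by
  have hσ : Function.Injective σ := fun a b h => by rw [← hσd a, ← hσd b, h]
  refine ⟨LinearMap.ker (phi2 F σ), ?_, ?_⟩
  · intro x hx hx0
    have hxa : ∃ a m, x a m ≠ 0 := by
      by_contra h; push_neg at h
      exact hx0 (by funext a m; exact h a m)
    obtain ⟨a, m, hxam⟩ := hxa
    refine Set.mem_iUnion.mpr ⟨σ a, Set.mem_iUnion.mpr ⟨m, ?_⟩⟩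
    refine ⟨fun j => ?_, ?_⟩
    · have h0 := congrFun (LinearMap.mem_ker.mp hx) (a, j)
      exact h0
    · rw [hσd a]; exact hxam
  · have h2 := LinearMap.finrank_range_add_finrank_ker (phi2 F σ)
    have hr : LinearMap.range (phi2 F σ) = ⊤ :=
      LinearMap.range_eq_top.mpr (phi2_surj F σ hσ)
    rw [hr] at h2
    have htop : Module.finrank F (⊤ : Submodule F (Fin N × Fin N → F)) = N * N := by
      rw [finrank_top]; simp
    have hM : Module.finrank F (Matrix (Fin N) (Fin K × Fin N) F) = N * (K * N) := by
      simp [Module.finrank_matrix]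
    omega

section LowRank

variable (d : Fin K → Fin N)

/-- Auxiliary summation identity over the subtype of demanded files. -/
lemma sum_dite_image (t : (Fin K × Fin N) × {x : Fin N // x ∈ Finset.univ.image d} → F)
    (m : Fin K × Fin N) :
    (∑ a : Fin N, if h : a ∈ Finset.univ.image d then t (m, ⟨a, h⟩) else 0)
      = ∑ x : {x : Fin N // x ∈ Finset.univ.image d}, t (m, x) := by
  classical
  calc (∑ a : Fin N, if h : a ∈ Finset.univ.image d then t (m, ⟨a, h⟩) else 0)
      = ∑ a ∈ Finset.univ.image d,
          (if h : a ∈ Finset.univ.image d then t (m, ⟨a, h⟩) else 0) :=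
        (Finset.sum_subset (Finset.subset_univ _) (fun x _ hx => dif_neg hx)).symm
    _ = ∑ x ∈ (Finset.univ.image d).attach,
          (if h : (x : Fin N) ∈ Finset.univ.image d then t (m, ⟨(x : Fin N), h⟩) else 0) :=
        (Finset.sum_attach _ _).symm
    _ = ∑ x : {x : Fin N // x ∈ Finset.univ.image d}, t (m, x) := by
        rw [Finset.univ_eq_attach]
        exact Finset.sum_congr rfl fun x _ => by simp

/-- The independent subspace in the case `N_e(d) < N`, built from a non-demanded file `b0`. -/
noncomputable def L1 (b0 : Fin N) :
    (((Fin K × Fin N) × {x : Fin N // x ∈ Finset.univ.image d}) → F) →ₗ[F]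
      Matrix (Fin N) (Fin K × Fin N) F where
  toFun t := fun a m =>
    (if h : a ∈ Finset.univ.image d then t (m, ⟨a, h⟩) else 0)
      + (if a = b0 then -∑ x : {x : Fin N // x ∈ Finset.univ.image d}, t (m, x) else 0)
  map_add' t t' := by
    funext a m
    have h1 : (if h : a ∈ Finset.univ.image d then (t + t') (m, ⟨a, h⟩) else 0)
        = (if h : a ∈ Finset.univ.image d then t (m, ⟨a, h⟩) else 0)
          + (if h : a ∈ Finset.univ.image d then t' (m, ⟨a, h⟩) else 0) := by
      split <;> simp
    have h2 : (if a = b0 then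
          -∑ x : {x : Fin N // x ∈ Finset.univ.image d}, (t + t') (m, x) else 0)
        = (if a = b0 then
            -∑ x : {x : Fin N // x ∈ Finset.univ.image d}, t (m, x) else 0)
          + (if a = b0 then
            -∑ x : {x : Fin N // x ∈ Finset.univ.image d}, t' (m, x) else 0) := by
      split <;> simp [Finset.sum_add_distrib, add_comm]
    rw [h1, h2]; exact add_add_add_comm _ _ _ _
  map_smul' r t := by
    funext a m
    have h1 : (if h : a ∈ Finset.univ.image d then (r • t) (m, ⟨a, h⟩) else 0)
        = r * (if h : a ∈ Finset.univ.image d then t (m, ⟨a, h⟩) else 0) := by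
      split <;> simp
    have h2 : (if a = b0 then
          -∑ x : {x : Fin N // x ∈ Finset.univ.image d}, (r • t) (m, x) else 0)
        = r * (if a = b0 then
            -∑ x : {x : Fin N // x ∈ Finset.univ.image d}, t (m, x) else 0) := by
      split <;> simp [Finset.mul_sum]
    rw [h1, h2]; exact (mul_add r _ _).symm

lemma L1_col (b0 : Fin N) (hb0 : b0 ∉ Finset.univ.image d)
    (t : ((Fin K × Fin N) × {x : Fin N // x ∈ Finset.univ.image d}) → F)
    (m : Fin K × Fin N) : ∑ a, L1 F d b0 t a m = 0 := by
  show (∑ a : Fin N, ((if h : a ∈ Finset.univ.image d then t (m, ⟨a, h⟩) else 0)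
      + (if a = b0 then -∑ x : {x : Fin N // x ∈ Finset.univ.image d}, t (m, x) else 0))) = 0
  rw [Finset.sum_add_distrib, sum_dite_image F d t m, Finset.sum_ite_eq' Finset.univ b0]
  simp

lemma exists_U1 (b0 : Fin N) (hb0 : b0 ∉ Finset.univ.image d) :
    ∃ U : Submodule F (Matrix (Fin N) (Fin K × Fin N) F),
      (∀ x ∈ U, x ≠ 0 → x ∈ ⋃ i, ⋃ m, Zset F d i m) ∧
      Module.finrank F U = (K * N) * (Finset.univ.image d).card := by
  classical
  have hinj : Function.Injective (L1 F d b0) := by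
    rw [← LinearMap.ker_eq_bot, Submodule.eq_bot_iff]
    intro t ht
    have htz : L1 F d b0 t = 0 := LinearMap.mem_ker.mp ht
    funext q
    have hne : (q.2 : Fin N) ≠ b0 := fun hh => hb0 (hh ▸ q.2.2)
    have hval : L1 F d b0 t (q.2 : Fin N) q.1 = t q := by
      show ((if h : (q.2 : Fin N) ∈ Finset.univ.image d then
              t (q.1, ⟨(q.2 : Fin N), h⟩) else 0)
          + (if (q.2 : Fin N) = b0 then
              -∑ x : {x : Fin N // x ∈ Finset.univ.image d}, t (q.1, x) else 0)) = t q
      rw [dif_pos q.2.2, if_neg hne, add_zero]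
    have h := congrFun (congrFun htz (q.2 : Fin N)) q.1
    rw [hval] at h
    simpa using h
  refine ⟨LinearMap.range (L1 F d b0), ?_, ?_⟩
  · rintro x hx hx0
    obtain ⟨t, rfl⟩ := hx
    have ht : t ≠ 0 := fun h => hx0 (by rw [h, map_zero])
    obtain ⟨q, hq⟩ := Function.ne_iff.mp ht
    obtain ⟨i, _, hdi⟩ := Finset.mem_image.mp q.2.2
    refine Set.mem_iUnion.mpr ⟨i, Set.mem_iUnion.mpr ⟨q.1, ?_⟩⟩
    refine ⟨fun j => L1_col F d b0 hb0 t (i, j), ?_⟩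
    have hne : (q.2 : Fin N) ≠ b0 := fun hh => hb0 (hh ▸ q.2.2)
    rw [hdi]
    show ((if h : (q.2 : Fin N) ∈ Finset.univ.image d then
            t (q.1, ⟨(q.2 : Fin N), h⟩) else 0)
        + (if (q.2 : Fin N) = b0 then
            -∑ x : {x : Fin N // x ∈ Finset.univ.image d}, t (q.1, x) else 0)) ≠ 0
    rw [dif_pos q.2.2, if_neg hne, add_zero]
    exact hq
  · rw [LinearMap.finrank_range_of_inj hinj]
    simp only [Module.finrank_pi, Fintype.card_prod, Fintype.card_coe, Fintype.card_fin]

/-- Row-support embedding, used to bound the min-rank for `c = 0`. -/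
noncomputable def L2 :
    (((Fin K × Fin N) × {x : Fin N // x ∈ Finset.univ.image d}) → F) →ₗ[F]
      Matrix (Fin N) (Fin K × Fin N) F where
  toFun t := fun a m => if h : a ∈ Finset.univ.image d then t (m, ⟨a, h⟩) else 0
  map_add' t t' := by
    funext a m
    show _ = (if h : a ∈ Finset.univ.image d then t (m, ⟨a, h⟩) else 0)
      + (if h : a ∈ Finset.univ.image d then t' (m, ⟨a, h⟩) else 0)
    split <;> simp
  map_smul' r t := by
    funext a m
    show _ = r * (if h : a ∈ Finset.univ.image d then t (m, ⟨a, h⟩) else 0)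
    split <;> simp

lemma kappa_elt_c0 :
    Module.finrank F (Submodule.span F (Set.range (Bfun F d (fun _ _ => (0 : F)))))
      ≤ (K * N) * (Finset.univ.image d).card := by
  classical
  have hsub : Set.range (Bfun F d (fun _ _ => (0 : F))) ⊆
      ↑(LinearMap.range (L2 F d)) := by
    rintro x ⟨p, rfl⟩
    refine ⟨fun q => if (q.2 : Fin N) = d p.1 ∧ q.1 = p.2 then 1 else 0, ?_⟩
    funext a m
    show (if h : a ∈ Finset.univ.image d then
        (if ((⟨a, h⟩ : {x : Fin N // x ∈ Finset.univ.image d}) : Fin N) = d p.1 ∧ m = p.2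
          then (1 : F) else 0) else 0) = Bfun F d (fun _ _ => (0 : F)) p a m
    rw [Bfun_apply]
    simp only [zero_mul, Finset.sum_const_zero, add_zero]
    by_cases hS : a ∈ Finset.univ.image d
    · rw [dif_pos hS]
      by_cases h1 : a = d p.1 <;> by_cases h2 : m = p.2
      · simp [h1, h2]
      · have h2' : ¬(p.2 = m) := fun hh => h2 hh.symm
        simp [h1, h2, h2']
      · have h1' : ¬(d p.1 = a) := fun hh => h1 hh.symm
        simp [h1, h2, h1']
      · have h1' : ¬(d p.1 = a) := fun hh => h1 hh.symm
        simp [h1, h1']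
    · rw [dif_neg hS]
      have hda : d p.1 ≠ a := fun hh =>
        hS (hh ▸ Finset.mem_image_of_mem d (Finset.mem_univ p.1))
      simp [hda]
  calc Module.finrank F (Submodule.span F (Set.range (Bfun F d (fun _ _ => (0 : F)))))
      ≤ Module.finrank F (LinearMap.range (L2 F d)) :=
        Submodule.finrank_mono (Submodule.span_le.mpr hsub)
    _ ≤ Module.finrank F
          ((((Fin K × Fin N) × {x : Fin N // x ∈ Finset.univ.image d}) → F)) :=
        LinearMap.finrank_range_le _
    _ = (K * N) * (Finset.univ.image d).card := by
        simp only [Module.finrank_pi, Fintype.card_prod, Fintype.card_coe, Fintype.card_fin]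

/-- The decoding map certifying the min-rank bound when all files are demanded. -/
noncomputable def PsiMap :
    Matrix (Fin N) (Fin K × Fin N) F →ₗ[F] (Fin N × Fin N → F) where
  toFun Y := fun q => ∑ k, if d k = q.1 then Y q.1 (k, q.2) else 0
  map_add' Y Y' := by
    funext q
    show (∑ k, if d k = q.1 then (Y + Y') q.1 (k, q.2) else 0)
        = (∑ k, if d k = q.1 then Y q.1 (k, q.2) else 0)
          + (∑ k, if d k = q.1 then Y' q.1 (k, q.2) else 0)
    rw [← Finset.sum_add_distrib]
    exact Finset.sum_congr rfl fun k _ => by split <;> simp [Matrix.add_apply]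
  map_smul' r Y := by
    funext q
    show (∑ k, if d k = q.1 then (r • Y) q.1 (k, q.2) else 0)
        = r * ∑ k, if d k = q.1 then Y q.1 (k, q.2) else 0
    rw [Finset.mul_sum]
    exact Finset.sum_congr rfl fun k _ => by split <;> simp [Matrix.smul_apply]

lemma PsiMap_surj (σ : Fin N → Fin K) (hσd : ∀ b, d (σ b) = b) :
    Function.Surjective (PsiMap F d) := by
  intro w
  refine ⟨fun a km => if km.1 = σ a then w (a, km.2) else 0, ?_⟩
  funext q
  show (∑ k, if d k = q.1 then (if k = σ q.1 then w (q.1, q.2) else 0) else 0) = w q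
  rw [Finset.sum_eq_single (σ q.1)]
  · rw [if_pos (hσd q.1), if_pos rfl, Prod.mk.eta]
  · intro k _ hk
    simp [hk]
  · simp

/-- The CFL coefficients in the case where every file is demanded. -/
noncomputable def cCFL : Fin K × (Fin K × Fin N) → Fin N → F :=
  fun p j => if d p.1 = d p.2.1 ∧ j = p.2.2 then (-1 : F) else 0

lemma Psi_Bfun_zero (p : Fin K × (Fin K × Fin N)) :
    PsiMap F d (Bfun F d (cCFL F d) p) = 0 := by
  funext q
  show (∑ k, if d k = q.1 then Bfun F d (cCFL F d) p q.1 (k, q.2) else 0) = 0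
  have hent : ∀ k : Fin K, Bfun F d (cCFL F d) p q.1 (k, q.2) =
      (if d p.1 = q.1 ∧ p.2.1 = k ∧ p.2.2 = q.2 then (1 : F) else 0)
        + (if k = p.1 ∧ d p.1 = d p.2.1 ∧ q.2 = p.2.2 then (-1 : F) else 0) := by
    intro k
    rw [Bfun_apply]
    congr 1
    · simp [Prod.ext_iff, and_assoc]
    · rw [Finset.sum_eq_single q.2]
      · show (if d p.1 = d p.2.1 ∧ q.2 = p.2.2 then (-1 : F) else 0)
            * (if (k, q.2) = (p.1, q.2) then (1 : F) else 0) = _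
        by_cases hk : k = p.1 <;> by_cases hc : d p.1 = d p.2.1 ∧ q.2 = p.2.2 <;>
          simp [hk, hc, Prod.ext_iff]
      · intro j _ hj
        have hne : (k, q.2) ≠ (p.1, j) := fun hh => hj (congrArg Prod.snd hh).symm
        simp [hne]
      · simp
  simp only [hent]
  have hsplit : ∀ k : Fin K, (if d k = q.1 then
      ((if d p.1 = q.1 ∧ p.2.1 = k ∧ p.2.2 = q.2 then (1 : F) else 0)
        + (if k = p.1 ∧ d p.1 = d p.2.1 ∧ q.2 = p.2.2 then (-1 : F) else 0)) else 0)
      = (if d k = q.1 then (if d p.1 = q.1 ∧ p.2.1 = k ∧ p.2.2 = q.2 then (1 : F) else 0) else 0)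
        + (if d k = q.1 then
            (if k = p.1 ∧ d p.1 = d p.2.1 ∧ q.2 = p.2.2 then (-1 : F) else 0) else 0) :=
    fun k => by split <;> simp
  rw [Finset.sum_congr rfl fun k _ => hsplit k, Finset.sum_add_distrib]
  have hS1 : (∑ k, if d k = q.1 then
      (if d p.1 = q.1 ∧ p.2.1 = k ∧ p.2.2 = q.2 then (1 : F) else 0) else 0)
      = if d p.2.1 = q.1 ∧ d p.1 = q.1 ∧ p.2.2 = q.2 then (1 : F) else 0 := by
    rw [Finset.sum_eq_single p.2.1]
    · by_cases h1 : d p.2.1 = q.1 <;> by_cases h2 : d p.1 = q.1 <;>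
        by_cases h3 : p.2.2 = q.2 <;> simp [h1, h2, h3]
    · intro k _ hk
      have hne : ¬(d p.1 = q.1 ∧ p.2.1 = k ∧ p.2.2 = q.2) := fun hh => hk hh.2.1.symm
      simp [hne]
    · simp
  have hS2 : (∑ k, if d k = q.1 then
      (if k = p.1 ∧ d p.1 = d p.2.1 ∧ q.2 = p.2.2 then (-1 : F) else 0) else 0)
      = if d p.1 = q.1 ∧ d p.1 = d p.2.1 ∧ q.2 = p.2.2 then (-1 : F) else 0 := by
    rw [Finset.sum_eq_single p.1]
    · by_cases h1 : d p.1 = q.1 <;> by_cases h2 : d p.1 = d p.2.1 <;>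
        by_cases h3 : q.2 = p.2.2 <;> simp [h1, h2, h3]
    · intro k _ hk
      have hne : ¬(k = p.1 ∧ d p.1 = d p.2.1 ∧ q.2 = p.2.2) := fun hh => hk hh.1
      simp [hne]
    · simp
  rw [hS1, hS2]
  by_cases h1 : d p.1 = q.1
  · by_cases h2 : d p.1 = d p.2.1
    · have hk0 : d p.2.1 = q.1 := h2.symm.trans h1
      by_cases h3 : p.2.2 = q.2
      · have h3' : q.2 = p.2.2 := h3.symm
        rw [if_pos ⟨hk0, h1, h3⟩, if_pos ⟨h1, h2, h3'⟩]; ring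
      · have h3' : ¬(q.2 = p.2.2) := fun hh => h3 hh.symm
        simp [h3, h3']
    · have hk0 : ¬(d p.2.1 = q.1) := fun hh => h2 (h1.trans hh.symm)
      simp [h2, hk0]
  · simp [h1]

lemma kappa_elt_cN (σ : Fin N → Fin K) (hσd : ∀ b, d (σ b) = b) :
    Module.finrank F (Submodule.span F (Set.range (Bfun F d (cCFL F d))))
      ≤ N * (K * N) - N * N := by
  have hle : Submodule.span F (Set.range (Bfun F d (cCFL F d)))
      ≤ LinearMap.ker (PsiMap F d) :=
    Submodule.span_le.mpr (by
      rintro x ⟨p, rfl⟩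
      exact LinearMap.mem_ker.mpr (Psi_Bfun_zero F d p))
  have h2 := LinearMap.finrank_range_add_finrank_ker (PsiMap F d)
  have hr : LinearMap.range (PsiMap F d) = ⊤ :=
    LinearMap.range_eq_top.mpr (PsiMap_surj F d σ hσd)
  rw [hr] at h2
  have htop : Module.finrank F (⊤ : Submodule F (Fin N × Fin N → F)) = N * N := by
    rw [finrank_top]; simp
  have hM : Module.finrank F (Matrix (Fin N) (Fin K × Fin N) F) = N * (K * N) := by
    simp [Module.finrank_matrix]
  have hmono := Submodule.finrank_mono hle
  omega

end LowRank

end Aux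

theorem alpha_eq_kappa_CFL_KgtN (F : Type*) [Field F] [Fintype F]
    (N K : ℕ) (hN : 1 ≤ N) (hK : N < K) (d : Fin K → Fin N) :
    alphaCFL F d = kappaCFL F d ∧
    (numDistinct d ≤ N - 1 → alphaCFL F d = N * K * numDistinct d) ∧
    (numDistinct d = N → alphaCFL F d = N ^ 2 * (K - 1)) := by
  classical
  have hBdef : ∀ c : Fin K × (Fin K × Fin N) → Fin N → F,
      (fun p : Fin K × (Fin K × Fin N) =>
        Matrix.single (d p.1) p.2 (1 : F) + ∑ j, c p j • vmat F p.1 j)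
        = Bfun F d c := fun c => rfl
  set αS : Set ℕ := { k | ∃ U : Submodule F (Matrix (Fin N) (Fin K × Fin N) F),
    (∀ x ∈ U, x ≠ 0 → x ∈ ⋃ i, ⋃ m, Zset F d i m) ∧ Module.finrank F U = k } with hαS
  set κS : Set ℕ := { k | ∃ c : Fin K × (Fin K × Fin N) → Fin N → F,
    Module.finrank F (Submodule.span F
      (Set.range fun p : Fin K × (Fin K × Fin N) =>
        Matrix.single (d p.1) p.2 (1 : F) + ∑ j, c p j • vmat F p.1 j)) = k }
    with hκS
  have hα : alphaCFL F d = sSup αS := rfl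
  have hκ : kappaCFL F d = sInf κS := rfl
  have αne : αS.Nonempty := by
    refine ⟨0, ⊥, fun x hx hx0 => absurd ((Submodule.mem_bot F).mp hx) hx0, ?_⟩
    simp
  have κne : κS.Nonempty := ⟨_, fun _ _ => (0 : F), rfl⟩
  have αbdd : BddAbove αS := by
    refine ⟨Module.finrank F (Matrix (Fin N) (Fin K × Fin N) F), fun k hk => ?_⟩
    obtain ⟨U, _, hU⟩ := hk
    exact hU ▸ Submodule.finrank_le U
  have hAK : sSup αS ≤ sInf κS := by
    refine le_csInf κne fun k' hk' => csSup_le αne fun k hk => ?_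
    obtain ⟨U, hU, rfl⟩ := hk
    obtain ⟨c, rfl⟩ := hk'
    exact finrank_le_span_Bfun F d c U hU
  by_cases hsN : numDistinct d = N
  · -- every file is demanded
    have himg : Finset.univ.image d = Finset.univ :=
      Finset.eq_univ_of_card _ (hsN.trans (Fintype.card_fin N).symm)
    have hex : ∀ b : Fin N, ∃ i, d i = b := fun b => by
      have hb : b ∈ Finset.univ.image d := himg ▸ Finset.mem_univ b
      obtain ⟨i, _, hi⟩ := Finset.mem_image.mp hb
      exact ⟨i, hi⟩
    choose σ hσd using hex
    obtain ⟨U, hU, hUr⟩ := exists_U2 F d σ hσd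
    have hVleα : N * (K * N) - N * N ≤ sSup αS := le_csSup αbdd ⟨U, hU, hUr⟩
    have hκle : sInf κS ≤ N * (K * N) - N * N := by
      have hmem : Module.finrank F
          (Submodule.span F (Set.range (Bfun F d (cCFL F d)))) ∈ κS :=
        ⟨cCFL F d, rfl⟩
      exact (csInf_le (OrderBot.bddBelow κS) hmem).trans (kappa_elt_cN F d σ hσd)
    have heq1 : sSup αS = N * (K * N) - N * N := le_antisymm (hAK.trans hκle) hVleα
    have heq2 : sInf κS = N * (K * N) - N * N := le_antisymm hκle (hVleα.trans hAK)
    have harith : N * (K * N) - N * N = N ^ 2 * (K - 1) := by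
      obtain ⟨K', rfl⟩ : ∃ K', K = K' + 1 := ⟨K - 1, by omega⟩
      have h : N * ((K' + 1) * N) = N ^ 2 * K' + N * N := by ring
      rw [h, Nat.add_sub_cancel, Nat.add_sub_cancel]
    refine ⟨by rw [hα, hκ, heq1, heq2], fun hle => ?_, fun _ => by rw [hα, heq1, harith]⟩
    exfalso; omega
  · -- some file is not demanded
    obtain ⟨b0, hb0⟩ : ∃ b, b ∉ Finset.univ.image d := by
      by_contra h
      push_neg at h
      exact hsN (by
        rw [numDistinct, Finset.eq_univ_iff_forall.mpr h, Finset.card_univ, Fintype.card_fin])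
    obtain ⟨U, hU, hUr⟩ := exists_U1 F d b0 hb0
    have hVleα : (K * N) * (Finset.univ.image d).card ≤ sSup αS :=
      le_csSup αbdd ⟨U, hU, hUr⟩
    have hκle : sInf κS ≤ (K * N) * (Finset.univ.image d).card := by
      have hmem : Module.finrank F
          (Submodule.span F (Set.range (Bfun F d (fun _ _ => (0 : F))))) ∈ κS :=
        ⟨fun _ _ => (0 : F), rfl⟩
      exact (csInf_le (OrderBot.bddBelow κS) hmem).trans (kappa_elt_c0 F d)
    have heq1 : sSup αS = (K * N) * (Finset.univ.image d).card :=
      le_antisymm (hAK.trans hκle) hVleα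
    have heq2 : sInf κS = (K * N) * (Finset.univ.image d).card :=
      le_antisymm hκle (hVleα.trans hAK)
    have harith : (K * N) * (Finset.univ.image d).card = N * K * numDistinct d := by
      rw [numDistinct]; ring
    exact ⟨by rw [hα, hκ, heq1, heq2], fun _ => by rw [hα, heq1, harith],
      fun h => absurd h hsN⟩
end

section
/- For integers N ≥ 1 and K > N, if the demand d : [K] → [N] is surjective (i.e., N_e(d) = N), then the generalized independence number satisfies α(d) ≥ N²(K−1). -/
open Matrix

theorem alpha_ge_of_surjective (F : Type*) [Field F] [Fintype F]
    (N K : ℕ) (hN : 1 ≤ N) (hK : N < K) (d : Fin K → Fin N)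
    (hd : Function.Surjective d) :
    N ^ 2 * (K - 1) ≤ alphaCFL F d := by
  obtain ⟨σ, hσ⟩ := hd.hasRightInverse
  have hσinj : Function.Injective σ := hσ.injective
  -- the linear map of constraints
  set φ : Matrix (Fin N) (Fin K × Fin N) F →ₗ[F] (Fin N × Fin N → F) :=
    { toFun := fun Z p => ∑ b, Z b (σ p.1, p.2)
      map_add' := by
        intro X Y; funext p
        simp [Matrix.add_apply, Finset.sum_add_distrib]
      map_smul' := by
        intro c X; funext p
        simp [Matrix.smul_apply, Finset.mul_sum] } with hφ
  have hφapply : ∀ Z p, φ Z p = ∑ b, Z b (σ p.1, p.2) := fun _ _ => rfl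
  -- φ is surjective
  have hsurj : Function.Surjective φ := by
    intro g
    refine ⟨fun b p => if b = (⟨0, hN⟩ : Fin N) then
      (if h : ∃ a, σ a = p.1 then g (h.choose, p.2) else 0) else 0, ?_⟩
    funext p
    refine (hφapply _ p).trans ?_
    rw [Finset.sum_eq_single (⟨0, hN⟩ : Fin N)]
    · have hex : ∃ a, σ a = σ p.1 := ⟨p.1, rfl⟩
      have hch : hex.choose = p.1 := hσinj hex.choose_spec
      simp [hex, hch]
    · intro b _ hb; simp [hb]
    · intro h; exact absurd (Finset.mem_univ _) h
  have hrange : LinearMap.range φ = ⊤ := LinearMap.range_eq_top.mpr hsurj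
  -- dimension count
  have hrk := LinearMap.finrank_range_add_finrank_ker φ
  rw [hrange] at hrk
  have hdom : Module.finrank F (Matrix (Fin N) (Fin K × Fin N) F) = N * (K * N) := by
    simp [Module.finrank_matrix]
  have hcod : Module.finrank F (⊤ : Submodule F (Fin N × Fin N → F)) = N * N := by
    rw [finrank_top]
    simp [Module.finrank_pi]
  rw [hdom, hcod] at hrk
  obtain ⟨k, rfl⟩ : ∃ k, K = k + 1 := ⟨K - 1, by omega⟩
  have hker : Module.finrank F (LinearMap.ker φ) = N ^ 2 * (k + 1 - 1) := by
    have : N * ((k + 1) * N) = N * N + N ^ 2 * k := by ring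
    simp only [Nat.add_sub_cancel]
    omega
  -- membership in the defining set of alphaCFL
  have hmem : N ^ 2 * (k + 1 - 1) ∈ { n | ∃ U : Submodule F (Matrix (Fin N) (Fin (k+1) × Fin N) F),
      (∀ x ∈ U, x ≠ 0 → x ∈ ⋃ i, ⋃ m, Zset F d i m) ∧ Module.finrank F U = n } := by
    refine ⟨LinearMap.ker φ, ?_, hker⟩
    intro x hx hx0
    have : ∃ a m, x a m ≠ 0 := by
      by_contra h
      push_neg at h
      exact hx0 (by funext a m; exact h a m)
    obtain ⟨a, m, ham⟩ := this
    refine Set.mem_iUnion.mpr ⟨σ a, Set.mem_iUnion.mpr ⟨m, ?_, ?_⟩⟩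
    · intro j
      have := congrFun (LinearMap.mem_ker.mp hx) (a, j)
      simpa [hφapply] using this
    · rw [hσ a]; exact ham
  -- bounded above
  have hbdd : BddAbove { n | ∃ U : Submodule F (Matrix (Fin N) (Fin (k+1) × Fin N) F),
      (∀ x ∈ U, x ≠ 0 → x ∈ ⋃ i, ⋃ m, Zset F d i m) ∧ Module.finrank F U = n } := by
    refine ⟨Module.finrank F (Matrix (Fin N) (Fin (k+1) × Fin N) F), ?_⟩
    rintro n ⟨U, -, rfl⟩
    exact Submodule.finrank_le U
  exact le_csSup hbdd hmem
end

section
/- For integers N ≥ 1 and K > N, if the demand d : [K] → [N] satisfies N_e(d) ≤ N−1, then the generalized independence number satisfies α(d) ≥ NK·N_e(d). -/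
open Matrix

noncomputable def auxMap (F : Type*) [Field F] {N K : ℕ} (S : Finset (Fin N)) (t : Fin N) :
    ((↥S × (Fin K × Fin N)) → F) →ₗ[F] Matrix (Fin N) (Fin K × Fin N) F where
  toFun f := fun a m => if h : a ∈ S then f (⟨a, h⟩, m)
    else if a = t then -∑ b : ↥S, f (b, m) else 0
  map_add' f g := by
    funext a m
    change _ = (if h : a ∈ S then f (⟨a, h⟩, m) else if a = t then -∑ b : ↥S, f (b, m) else 0) + (if h : a ∈ S then g (⟨a, h⟩, m) else if a = t then -∑ b : ↥S, g (b, m) else 0)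
    by_cases h : a ∈ S
    · simp [h, Matrix.add_apply]
    · by_cases hat : a = t
      · subst hat; simp [h, Finset.sum_add_distrib, Matrix.add_apply]; abel
      · simp [h, hat, Matrix.add_apply]
  map_smul' c f := by
    funext a m
    change _ = c * (if h : a ∈ S then f (⟨a, h⟩, m) else if a = t then -∑ b : ↥S, f (b, m) else 0)
    by_cases h : a ∈ S
    · simp [h, Matrix.smul_apply]
    · by_cases hat : a = t
      · subst hat; simp [h, Finset.mul_sum, Matrix.smul_apply]
      · simp [h, hat, Matrix.smul_apply]

lemma auxMap_apply (F : Type*) [Field F] {N K : ℕ} (S : Finset (Fin N)) (t : Fin N)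
    (f : (↥S × (Fin K × Fin N)) → F) (a : Fin N) (m : Fin K × Fin N) :
    auxMap F S t f a m = if h : a ∈ S then f (⟨a, h⟩, m)
      else if a = t then -∑ b : ↥S, f (b, m) else 0 := rfl

lemma auxMap_inj (F : Type*) [Field F] {N K : ℕ} (S : Finset (Fin N)) (t : Fin N) :
    Function.Injective (auxMap F (K := K) S t) := by
  rw [injective_iff_map_eq_zero]
  intro f hf
  funext p
  obtain ⟨⟨a, ha⟩, m⟩ := p
  have := congrFun (congrFun hf a) m
  simpa [auxMap_apply, ha] using this

lemma auxMap_colsum (F : Type*) [Field F] {N K : ℕ} (S : Finset (Fin N)) (t : Fin N)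
    (ht : t ∉ S) (f : ↥S × (Fin K × Fin N) → F) (m : Fin K × Fin N) :
    ∑ a, auxMap F S t f a m = 0 := by
  have hsplit := Finset.sum_add_sum_compl S (fun a => auxMap F S t f a m)
  rw [← hsplit]
  have h1 : ∑ a ∈ S, auxMap F S t f a m = ∑ b : ↥S, f (b, m) := by
    rw [← Finset.sum_attach S (fun a => auxMap F S t f a m)]
    apply Finset.sum_congr rfl
    intro b _
    simp [auxMap_apply, b.2]
  have h2 : ∑ a ∈ Sᶜ, auxMap F S t f a m = -∑ b : ↥S, f (b, m) := by
    have : ∀ a ∈ Sᶜ, auxMap F S t f a m =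
        if a = t then -∑ b : ↥S, f (b, m) else 0 := by
      intro a ha
      simp only [Finset.mem_compl] at ha
      simp [auxMap_apply, ha]
    rw [Finset.sum_congr rfl this, Finset.sum_ite_eq' Sᶜ t]
    simp [ht]
  rw [h1, h2]; ring

theorem alpha_ge_of_not_all_distinct (F : Type*) [Field F] [Fintype F]
    (N K : ℕ) (hN : 1 ≤ N) (hK : N < K) (d : Fin K → Fin N)
    (hd : numDistinct d ≤ N - 1) :
    N * K * numDistinct d ≤ alphaCFL F d := by
  classical
  set S : Finset (Fin N) := Finset.univ.image d with hS
  have hcard : S.card < N := by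
    have : numDistinct d = S.card := rfl
    omega
  obtain ⟨t, ht⟩ : ∃ t : Fin N, t ∉ S := by
    by_contra h
    push_neg at h
    have h1 : (Finset.univ : Finset (Fin N)) ⊆ S := fun x _ => h x
    have := Finset.card_le_card h1
    simp at this
    omega
  set L := auxMap F (K := K) S t with hL
  set U := LinearMap.range L with hU
  have hprop : ∀ x ∈ U, x ≠ 0 → x ∈ ⋃ i, ⋃ m, Zset F d i m := by
    rintro x ⟨f, rfl⟩ hx
    have hf : f ≠ 0 := by rintro rfl; simp at hx
    obtain ⟨⟨⟨a, ha⟩, m⟩, hfa⟩ : ∃ p, f p ≠ 0 := by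
      by_contra h; push_neg at h; exact hf (funext h)
    obtain ⟨i, -, hi⟩ := Finset.mem_image.mp ha
    refine Set.mem_iUnion.mpr ⟨i, Set.mem_iUnion.mpr ⟨m, ?_, ?_⟩⟩
    · intro j; exact auxMap_colsum F S t ht f (i, j)
    · have : L f (d i) m = f (⟨a, ha⟩, m) := by
        subst hi
        simp [hL, auxMap_apply, ha]
      rw [this]
      exact hfa
  have hrank : Module.finrank F ↥U = N * K * numDistinct d := by
    rw [hU, LinearMap.finrank_range_of_inj (auxMap_inj F S t)]
    rw [Module.finrank_fintype_fun_eq_card]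
    have : numDistinct d = S.card := rfl
    simp [Fintype.card_prod, Fintype.card_coe, this]
    ring
  apply le_csSup
  · refine ⟨Module.finrank F (Matrix (Fin N) (Fin K × Fin N) F), ?_⟩
    rintro k ⟨V, -, rfl⟩
    exact V.finrank_le
  · exact ⟨U, hprop, hrank⟩
end

section
/- For all integers N ≥ 1, K > N and every demand d : [K] → [N], the min-rank satisfies κ(d) ≤ NK·N_e(d) if N_e(d) ≤ N−1, and κ(d) ≤ N²(K−1) if N_e(d) = N. Equivalently, there is a choice of side-information coefficient vectors for the receivers for which the span of the matrices E_{d(i),m} + Σ_j c_j·v_{i,j} has dimension at most the stated bound. -/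
open Matrix

/-- The auxiliary linear map used to bound the min-rank when all files are demanded. -/
def PhiCFL (F : Type*) [Field F] {N K : ℕ} (d : Fin K → Fin N) :
    Matrix (Fin N) (Fin K × Fin N) F →ₗ[F] ((Fin N × Fin N) → F) where
  toFun Z := fun q => ∑ k, if d k = q.1 then Z q.1 (k, q.2) else 0
  map_add' Z W := by
    funext q
    simp only [Matrix.add_apply, Pi.add_apply]
    rw [← Finset.sum_add_distrib]
    exact Finset.sum_congr rfl fun k _ => by split <;> simp
  map_smul' r Z := by
    funext q
    simp only [Matrix.smul_apply, RingHom.id_apply, Pi.smul_apply, smul_eq_mul, Finset.mul_sum]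
    exact Finset.sum_congr rfl fun k _ => by split <;> simp

theorem PhiCFL_apply (F : Type*) [Field F] {N K : ℕ} (d : Fin K → Fin N)
    (Z : Matrix (Fin N) (Fin K × Fin N) F) (q : Fin N × Fin N) :
    PhiCFL F d Z q = ∑ k, if d k = q.1 then Z q.1 (k, q.2) else 0 := rfl

theorem PhiCFL_vmat (F : Type*) [Field F] {N K : ℕ} (d : Fin K → Fin N)
    (i : Fin K) (j' : Fin N) (q : Fin N × Fin N) :
    PhiCFL F d (vmat F i j') q = if d i = q.1 ∧ q.2 = j' then 1 else 0 := by
  rw [PhiCFL_apply]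
  rw [show (fun k => if d k = q.1 then vmat F i j' q.1 (k, q.2) else 0)
      = fun k => if k = i then (if d i = q.1 ∧ q.2 = j' then (1:F) else 0) else 0 from ?_]
  · simp [Finset.sum_ite_eq']
  · funext k
    by_cases hk : k = i
    · subst hk
      by_cases h1 : d k = q.1 <;> by_cases h2 : q.2 = j' <;> simp [vmat, h1, h2, Prod.ext_iff]
    · simp [vmat, hk, Prod.ext_iff]

theorem PhiCFL_std (F : Type*) [Field F] {N K : ℕ} (d : Fin K → Fin N)
    (i k : Fin K) (j : Fin N) (q : Fin N × Fin N) :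
    PhiCFL F d (Matrix.single (d i) (k, j) (1:F)) q
      = if d k = q.1 ∧ d i = q.1 ∧ j = q.2 then 1 else 0 := by
  rw [PhiCFL_apply]
  rw [show (fun k' => if d k' = q.1 then Matrix.single (d i) (k, j) (1:F) q.1 (k', q.2) else 0)
      = fun k' => if k' = k then (if d k = q.1 ∧ d i = q.1 ∧ j = q.2 then (1:F) else 0) else 0
      from ?_]
  · simp [Finset.sum_ite_eq']
  · funext k'
    by_cases hk : k' = k
    · subst hk
      by_cases h1 : d k' = q.1 <;> by_cases h2 : d i = q.1 <;> by_cases h3 : j = q.2 <;>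
        simp [Matrix.single, h1, h2, h3, Prod.ext_iff]
    · simp [Matrix.single, hk, Prod.ext_iff]
      tauto

theorem kappa_le_CFL_KgtN (F : Type*) [Field F] [Fintype F]
    (N K : ℕ) (hN : 1 ≤ N) (hK : N < K) (d : Fin K → Fin N) :
    (numDistinct d ≤ N - 1 → kappaCFL F d ≤ N * K * numDistinct d) ∧
    (numDistinct d = N → kappaCFL F d ≤ N ^ 2 * (K - 1)) := by
  classical
  constructor
  · -- first bound: take c = 0
    intro _h
    set c : Fin K × (Fin K × Fin N) → Fin N → F := fun _ _ => 0 with hc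
    refine le_trans (Nat.sInf_le ⟨c, rfl⟩) ?_
    set T : Finset (Matrix (Fin N) (Fin K × Fin N) F) :=
      ((Finset.univ.image d) ×ˢ (Finset.univ : Finset (Fin K × Fin N))).image
        (fun q : Fin N × (Fin K × Fin N) => Matrix.single q.1 q.2 (1:F)) with hT
    have hsub : (Set.range fun p : Fin K × (Fin K × Fin N) =>
        Matrix.single (d p.1) p.2 (1 : F) + ∑ j, c p j • vmat F p.1 j)
        ⊆ (T : Set (Matrix (Fin N) (Fin K × Fin N) F)) := by
      rintro x ⟨p, rfl⟩
      simp only [hc, zero_smul, Finset.sum_const_zero, add_zero]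
      rw [hT]
      refine Finset.mem_coe.mpr (Finset.mem_image.mpr ⟨(d p.1, p.2), ?_, rfl⟩)
      simp
    have h1 : Module.finrank F (Submodule.span F
        (Set.range fun p : Fin K × (Fin K × Fin N) =>
          Matrix.single (d p.1) p.2 (1 : F) + ∑ j, c p j • vmat F p.1 j))
        ≤ Module.finrank F (Submodule.span F (T : Set (Matrix (Fin N) (Fin K × Fin N) F))) :=
      Submodule.finrank_mono (Submodule.span_mono hsub)
    have h2 := finrank_span_finset_le_card (R := F) T
    have h3 : T.card ≤ numDistinct d * (K * N) := by
      rw [hT]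
      refine le_trans Finset.card_image_le ?_
      rw [Finset.card_product]
      simp [numDistinct]
    have : numDistinct d * (K * N) = N * K * numDistinct d := by ring
    rw [this] at h3
    exact le_trans h1 (le_trans h2 h3)
  · -- second bound: all files demanded
    intro hNe
    have himg : Finset.univ.image d = Finset.univ :=
      Finset.eq_univ_of_card _ (by simpa [Fintype.card_fin, numDistinct] using hNe)
    have hsurj : ∀ b : Fin N, ∃ k : Fin K, d k = b := by
      intro b
      have hb : b ∈ Finset.univ.image d := himg ▸ Finset.mem_univ b
      obtain ⟨k, _, hk⟩ := Finset.mem_image.mp hb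
      exact ⟨k, hk⟩
    choose σ hσ using hsurj
    set c : Fin K × (Fin K × Fin N) → Fin N → F :=
      fun p j' => if d p.2.1 = d p.1 ∧ j' = p.2.2 then (-1 : F) else 0 with hc
    refine le_trans (Nat.sInf_le ⟨c, rfl⟩) ?_
    -- the span is contained in the kernel of PhiCFL
    have hspan : Submodule.span F (Set.range fun p : Fin K × (Fin K × Fin N) =>
        Matrix.single (d p.1) p.2 (1 : F) + ∑ j, c p j • vmat F p.1 j)
        ≤ LinearMap.ker (PhiCFL F d) := by
      rw [Submodule.span_le]
      rintro x ⟨⟨i, k, j⟩, rfl⟩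
      simp only [SetLike.mem_coe, LinearMap.mem_ker, map_add, map_sum, _root_.map_smul]
      funext q
      simp only [Pi.add_apply, Finset.sum_apply, Pi.smul_apply, smul_eq_mul,
        PhiCFL_vmat, PhiCFL_std, Pi.zero_apply]
      rw [show (fun j' => c (i, (k, j)) j' * (if d i = q.1 ∧ q.2 = j' then (1:F) else 0))
          = fun j' => if j' = j then (if d k = d i ∧ d i = q.1 ∧ q.2 = j then (-1:F) else 0)
            else 0 from ?_]
      · rw [Finset.sum_ite_eq' Finset.univ j]
        simp only [Finset.mem_univ, if_true]
        have hiff : (d k = d i ∧ d i = q.1 ∧ q.2 = j) ↔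
            (d k = q.1 ∧ d i = q.1 ∧ j = q.2) := by
          constructor
          · rintro ⟨x, y, z⟩; exact ⟨x.trans y, y, z.symm⟩
          · rintro ⟨x, y, z⟩; exact ⟨x.trans y.symm, y, z.symm⟩
        rw [if_congr hiff rfl rfl]
        by_cases hC : d k = q.1 ∧ d i = q.1 ∧ j = q.2 <;> simp [hC]
      · funext j'
        simp only [hc]
        by_cases hj : j' = j
        · subst hj
          by_cases h1 : d k = d i <;> by_cases h2 : d i = q.1 <;> by_cases h3 : q.2 = j' <;>
            simp [h1, h2, h3]
        · simp [hj]
    -- PhiCFL is surjective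
    have hrange : LinearMap.range (PhiCFL F d) = ⊤ := by
      rw [LinearMap.range_eq_top]
      intro g
      refine ⟨fun a p => if p.1 = σ a then g (a, p.2) else 0, ?_⟩
      funext q
      show (∑ k, if d k = q.1 then (if k = σ q.1 then g (q.1, q.2) else 0) else 0) = g q
      rw [show (fun k => if d k = q.1 then
            (if k = σ q.1 then g (q.1, q.2) else 0) else 0)
          = fun k => if k = σ q.1 then g q else 0 from ?_]
      · simp [Finset.sum_ite_eq']
      · funext k
        by_cases hk : k = σ q.1
        · subst hk; simp [hσ]
        · simp [hk]
    have hrn := LinearMap.finrank_range_add_finrank_ker (PhiCFL F d)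
    rw [hrange, finrank_top] at hrn
    have e1 : Module.finrank F ((Fin N × Fin N) → F) = N * N := by
      simp [Module.finrank_pi]
    have e2 : Module.finrank F (Matrix (Fin N) (Fin K × Fin N) F) = N * (K * N) := by
      simp [Module.finrank_matrix]
    rw [e1, e2] at hrn
    have hle : Module.finrank F (Submodule.span F
        (Set.range fun p : Fin K × (Fin K × Fin N) =>
          Matrix.single (d p.1) p.2 (1 : F) + ∑ j, c p j • vmat F p.1 j))
        ≤ Module.finrank F (LinearMap.ker (PhiCFL F d)) :=
      Submodule.finrank_mono hspan
    obtain ⟨K', rfl⟩ : ∃ K', K = K' + 1 := ⟨K - 1, by omega⟩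
    have e3 : N * ((K' + 1) * N) = N * N * K' + N * N := by ring
    have e4 : N ^ 2 * (K' + 1 - 1) = N * N * K' := by
      simp only [Nat.add_sub_cancel]
      ring
    omega
end

section
/- Let N ≥ 1, K > N, and let d : [K] → [N] be a demand with N_e(d) ≤ N−1; let D ⊆ [N] be the range of d and fix u₀ ∈ [N]\D. Let S be the set of matrices M ∈ M_{N,K} such that every column of M sums to zero and every row of M with index in [N]\(D ∪ {u₀}) is zero. Then every nonzero element of S lies in ∪_{i,m} Z^{(i,m)}(d); in particular, for each nonzero M ∈ S there exist i ∈ [K] and a column index m with M(d(i),m) ≠ 0. -/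
open Matrix

theorem span_subset_Zunion (F : Type*) [Field F] [Fintype F]
    (N K : ℕ) (hN : 1 ≤ N) (hK : N < K) (d : Fin K → Fin N)
    (hd : numDistinct d ≤ N - 1)
    (u₀ : Fin N) (hu : u₀ ∉ Set.range d) :
    ∀ M : Matrix (Fin N) (Fin K × Fin N) F,
      (∀ m, ∑ a, M a m = 0) →
      (∀ a, a ∉ Set.range d → a ≠ u₀ → ∀ m, M a m = 0) →
      M ≠ 0 →
      (M ∈ ⋃ i, ⋃ m, Zset F d i m) ∧ ∃ i m, M (d i) m ≠ 0 := by
  intro M hcol hrow hM0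
  have key : ∃ i m, M (d i) m ≠ 0 := by
    have hex : ∃ a m, M a m ≠ 0 := by
      by_contra h
      push_neg at h
      exact hM0 (by ext a m; exact h a m)
    obtain ⟨a, m, ham⟩ := hex
    by_cases hr : a ∈ Set.range d
    · obtain ⟨i, rfl⟩ := hr; exact ⟨i, m, ham⟩
    · have ha : a = u₀ := by
        by_contra h; exact ham (hrow a hr h m)
      rw [ha] at ham
      have hsum := hcol m
      have hex2 : ∃ a', a' ≠ u₀ ∧ M a' m ≠ 0 := by
        by_contra h; push_neg at h
        have heq : ∑ a, M a m = M u₀ m := by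
          apply Finset.sum_eq_single
          · intro b _ hb; exact h b hb
          · intro hb; exact absurd (Finset.mem_univ _) hb
        rw [hsum] at heq; exact ham heq.symm
      obtain ⟨a', ha', hm'⟩ := hex2
      have hra : a' ∈ Set.range d := by
        by_contra h; exact hm' (hrow a' h ha' m)
      obtain ⟨i, rfl⟩ := hra
      exact ⟨i, m, hm'⟩
  obtain ⟨i, m, him⟩ := key
  refine ⟨?_, i, m, him⟩
  exact Set.mem_iUnion.2 ⟨i, Set.mem_iUnion.2 ⟨m, ⟨fun j => hcol (i, j), him⟩⟩⟩
end

section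
/- For all integers N ≥ 1, K > N, every demand d : [K] → [N], and every integer δ ≥ 0, the smallest length ℓ for which there exists a linear δ-error-correcting delivery code of length ℓ for I(M_CFL, d) equals N_q[κ*, 2δ+1], where κ* = NK·N_e(d) if N_e(d) ≤ N−1 and κ* = N²(K−1) if N_e(d) = N. -/
open Matrix

/-- `E` is a linear `δ`-error-correcting delivery code of length `ℓ` for the GIC
problem `I(M_CFL, d)` induced by CFL prefetching with `N` files and `K > N` users:
receiver `(i,m)` knows the `N` coded packets `∑_a X(a,(i,j))`, `j ∈ [N]`, and, from
any received word within Hamming distance `δ` of `E(X)`, must recover `X(d(i), m)`. -/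
def IsECDeliveryCode (F : Type*) [Field F] [DecidableEq F] {N K : ℕ}
    (d : Fin K → Fin N) (δ ℓ : ℕ)
    (E : Matrix (Fin N) (Fin K × Fin N) F →ₗ[F] (Fin ℓ → F)) : Prop :=
  ∀ (i : Fin K) (m : Fin K × Fin N), ∃ Dec : (Fin ℓ → F) → (Fin N → F) → F,
    ∀ X : Matrix (Fin N) (Fin K × Fin N) F, ∀ y : Fin ℓ → F,
      hammingDist y (E X) ≤ δ →
        Dec y (fun j => ∑ a, X a (i, j)) = X (d i) m

/-- The smallest length of a linear `δ`-error-correcting delivery code for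
`I(M_CFL, d)`. -/
noncomputable def optLen (F : Type*) [Field F] [DecidableEq F] {N K : ℕ}
    (d : Fin K → Fin N) (δ : ℕ) : ℕ :=
  sInf { ℓ | ∃ E : Matrix (Fin N) (Fin K × Fin N) F →ₗ[F] (Fin ℓ → F),
    IsECDeliveryCode F d δ ℓ E }

/-- `N_q[k, d']`: the smallest length `n` of a `k`-dimensional linear code over `F`
whose distinct codewords are at Hamming distance at least `d'` from each other. -/
noncomputable def shortestCodeLen (F : Type*) [Field F] [DecidableEq F] (k d' : ℕ) : ℕ :=
  sInf { n | ∃ C : Submodule F (Fin n → F), Module.finrank F C = k ∧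
    ∀ x ∈ C, ∀ y ∈ C, x ≠ y → d' ≤ hammingDist x y }

section Aux

variable {F : Type*} [Field F] [DecidableEq F] {N K : ℕ}

/-- The set of "confusable differences" for the induced index coding problem. -/
def InB (d : Fin K → Fin N) (Z : Matrix (Fin N) (Fin K × Fin N) F) : Prop :=
  ∃ i : Fin K, (∀ j, ∑ a, Z a (i, j) = 0) ∧ ∃ m, Z (d i) m ≠ 0

lemma isEC_of_dist {d : Fin K → Fin N} {δ ℓ : ℕ}
    {E : Matrix (Fin N) (Fin K × Fin N) F →ₗ[F] (Fin ℓ → F)}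
    (h : ∀ Z, InB d Z → 2 * δ < hammingNorm (E Z)) :
    IsECDeliveryCode F d δ ℓ E := by
  classical
  intro i m
  refine ⟨fun y s => if h' : ∃ X' : Matrix (Fin N) (Fin K × Fin N) F,
      hammingDist y (E X') ≤ δ ∧ (fun j => ∑ a, X' a (i, j)) = s
      then h'.choose (d i) m else 0, ?_⟩
  intro X y hy
  have hex : ∃ X' : Matrix (Fin N) (Fin K × Fin N) F,
      hammingDist y (E X') ≤ δ ∧
        (fun j => ∑ a, X' a (i, j)) = (fun j => ∑ a, X a (i, j)) := ⟨X, hy, rfl⟩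
  beta_reduce
  rw [dif_pos hex]
  obtain ⟨h1, h2⟩ := hex.choose_spec
  by_contra hne
  have hZ : InB d (X - hex.choose) := by
    refine ⟨i, ?_, m, ?_⟩
    · intro j
      have h2j := congrFun h2 j
      simp only [Matrix.sub_apply, Finset.sum_sub_distrib]
      rw [h2j, sub_self]
    · rw [Matrix.sub_apply]
      exact sub_ne_zero.mpr fun hc => hne hc.symm
  have hlt := h _ hZ
  have hle : hammingNorm (E (X - hex.choose)) ≤ 2 * δ := by
    rw [map_sub, ← neg_add_eq_sub, ← hammingDist_eq_hammingNorm, hammingDist_comm]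
    calc hammingDist (E X) (E hex.choose)
        ≤ hammingDist (E X) y + hammingDist y (E hex.choose) :=
          hammingDist_triangle _ _ _
      _ ≤ δ + δ := Nat.add_le_add (by rwa [hammingDist_comm]) h1
      _ = 2 * δ := by omega
  omega

lemma dist_of_isEC {d : Fin K → Fin N} {δ ℓ : ℕ}
    {E : Matrix (Fin N) (Fin K × Fin N) F →ₗ[F] (Fin ℓ → F)}
    (hE : IsECDeliveryCode F d δ ℓ E) :
    ∀ Z, InB d Z → 2 * δ < hammingNorm (E Z) := by
  classical
  intro Z hZ
  obtain ⟨i, hsum, m0, hm0⟩ := hZ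
  by_contra hle
  push_neg at hle
  obtain ⟨Dec, hDec⟩ := hE i m0
  set S : Finset (Fin ℓ) := Finset.univ.filter (fun k => E Z k ≠ 0) with hSdef
  have hScard : S.card = hammingNorm (E Z) := rfl
  obtain ⟨T, hTS, hTcard⟩ := S.exists_subset_card_eq (n := min δ S.card) (min_le_right _ _)
  set y : Fin ℓ → F := fun k => if k ∈ T then E Z k else 0 with hydef
  have h0 : hammingDist y (E (0 : Matrix (Fin N) (Fin K × Fin N) F)) ≤ δ := by
    rw [map_zero, hammingDist_zero_right]
    have hsub : Finset.univ.filter (fun k => y k ≠ 0) ⊆ T := by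
      intro k hk
      rw [Finset.mem_filter] at hk
      by_contra hkT
      exact hk.2 (by simp [hydef, hkT])
    calc hammingNorm y ≤ T.card := Finset.card_le_card hsub
      _ ≤ δ := by omega
  have h1 : hammingDist y (E Z) ≤ δ := by
    have hsub : Finset.univ.filter (fun k => y k ≠ E Z k) ⊆ S \ T := by
      intro k hk
      rw [Finset.mem_filter] at hk
      rw [Finset.mem_sdiff]
      by_cases hkT : k ∈ T
      · exact absurd (by simp [hydef, hkT]) hk.2
      · refine ⟨?_, hkT⟩
        rw [hSdef, Finset.mem_filter]
        refine ⟨Finset.mem_univ _, ?_⟩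
        intro h0'
        exact hk.2 (by simp [hydef, hkT, h0'])
    calc hammingDist y (E Z) ≤ (S \ T).card := Finset.card_le_card hsub
      _ = S.card - T.card := Finset.card_sdiff_of_subset hTS
      _ ≤ δ := by omega
  have e0 := hDec 0 y h0
  have eZ := hDec Z y h1
  have hside : (fun j => ∑ a, (0 : Matrix (Fin N) (Fin K × Fin N) F) a (i, j))
      = (fun j => ∑ a, Z a (i, j)) := by
    funext j
    rw [hsum j]
    simp
  rw [hside] at e0
  rw [eZ] at e0
  simp at e0
  exact hm0 e0

lemma optLen_eq_of_subspaces (d : Fin K → Fin N) (δ κ : ℕ)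
    (Dp : Type*) [AddCommGroup Dp] [Module F Dp] [FiniteDimensional F Dp]
    (hDp : Module.finrank F Dp = κ)
    (p : Matrix (Fin N) (Fin K × Fin N) F →ₗ[F] Dp)
    (hp : ∀ Z, p Z = 0 → ¬ InB d Z)
    (U : Submodule F (Matrix (Fin N) (Fin K × Fin N) F))
    (hUr : Module.finrank F U = κ)
    (hUB : ∀ Z ∈ U, Z ≠ 0 → InB d Z) :
    optLen F d δ = shortestCodeLen F κ (2 * δ + 1) := by
  unfold optLen shortestCodeLen
  congr 1
  ext n
  simp only [Set.mem_setOf_eq]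
  constructor
  · rintro ⟨E, hE⟩
    have hdist := dist_of_isEC hE
    have hrange : LinearMap.range (E ∘ₗ U.subtype) = Submodule.map E U := by
      rw [LinearMap.range_comp, Submodule.range_subtype]
    have hinj : Function.Injective (E ∘ₗ U.subtype) := by
      rw [← LinearMap.ker_eq_bot, LinearMap.ker_eq_bot']
      intro x hx
      have hx' : E (x : Matrix (Fin N) (Fin K × Fin N) F) = 0 := hx
      by_contra hx0
      have hxB : InB d (x : Matrix (Fin N) (Fin K × Fin N) F) :=
        hUB _ x.2 (fun hc => hx0 (Subtype.ext hc))
      have h2 := hdist _ hxB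
      rw [hx', hammingNorm_zero] at h2
      omega
    refine ⟨Submodule.map E U, ?_, ?_⟩
    · rw [← hrange, LinearMap.finrank_range_of_inj hinj, hUr]
    · rintro x ⟨Z1, hZ1, rfl⟩ y ⟨Z2, hZ2, rfl⟩ hxy
      have hZne : Z1 - Z2 ≠ 0 := fun h => hxy (by rw [sub_eq_zero] at h; rw [h])
      have hB := hUB _ (Submodule.sub_mem U hZ1 hZ2) hZne
      have h2 := hdist _ hB
      rw [map_sub] at h2
      rw [hammingDist_comm, hammingDist_eq_hammingNorm, neg_add_eq_sub]
      omega
  · rintro ⟨C, hC1, hC2⟩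
    have hfr : Module.finrank F Dp = Module.finrank F C := by rw [hDp, hC1]
    let ψ : Dp ≃ₗ[F] C := LinearEquiv.ofFinrankEq _ _ hfr
    refine ⟨C.subtype ∘ₗ (ψ : Dp →ₗ[F] C) ∘ₗ p, isEC_of_dist ?_⟩
    intro Z hZB
    have hpZ : p Z ≠ 0 := fun h => hp Z h hZB
    have hψ : ψ (p Z) ≠ 0 := fun h => hpZ (ψ.map_eq_zero_iff.mp h)
    have hne0 : ((ψ (p Z) : C) : Fin n → F) ≠ 0 := fun h => hψ (Subtype.ext h)
    have hd2 := hC2 _ (ψ (p Z)).2 0 C.zero_mem hne0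
    rw [hammingDist_zero_right] at hd2
    have hEZ : (C.subtype ∘ₗ (ψ : Dp →ₗ[F] C) ∘ₗ p) Z = ((ψ (p Z) : C) : Fin n → F) := rfl
    rw [hEZ]
    omega

variable (F) in
/-- Projection onto the rows indexed by `S`. -/
def proj1 (S : Finset (Fin N)) :
    Matrix (Fin N) (Fin K × Fin N) F →ₗ[F] (({a // a ∈ S} × (Fin K × Fin N)) → F) where
  toFun Z x := Z x.1.1 x.2
  map_add' Z W := rfl
  map_smul' c Z := rfl

@[simp] lemma proj1_apply (S : Finset (Fin N)) (Z : Matrix (Fin N) (Fin K × Fin N) F)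
    (x : {a // a ∈ S} × (Fin K × Fin N)) : proj1 F S Z x = Z x.1.1 x.2 := rfl

variable (F) in
/-- Embedding used for the `N_e(d) < N` lower-bound subspace. -/
noncomputable def emb1 (S : Finset (Fin N)) (b : Fin N) :
    (({a // a ∈ S} × (Fin K × Fin N)) → F) →ₗ[F] Matrix (Fin N) (Fin K × Fin N) F where
  toFun v := Matrix.of fun a m => if h : a ∈ S then v (⟨a, h⟩, m)
    else if a = b then -∑ x : {a // a ∈ S}, v (x, m) else 0
  map_add' v w := by
    funext a m
    by_cases h : a ∈ S
    · simp [Matrix.add_apply, h]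
    · by_cases hb : a = b
      · subst hb
        simp [Matrix.add_apply, h, Finset.sum_add_distrib] <;> ring
      · simp [Matrix.add_apply, h, hb]
  map_smul' c v := by
    funext a m
    by_cases h : a ∈ S
    · simp [Matrix.smul_apply, h]
    · by_cases hb : a = b
      · subst hb
        simp [Matrix.smul_apply, h, smul_eq_mul, Finset.mul_sum] <;> ring
      · simp [Matrix.smul_apply, h, hb]

@[simp] lemma emb1_apply (S : Finset (Fin N)) (b : Fin N)
    (v : ({a // a ∈ S} × (Fin K × Fin N)) → F) (a : Fin N) (m : Fin K × Fin N) :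
    emb1 F (K := K) S b v a m = if h : a ∈ S then v (⟨a, h⟩, m)
      else if a = b then -∑ x : {a // a ∈ S}, v (x, m) else 0 := rfl

variable (F) in
/-- The map whose kernel is the maximal `B`-avoiding subspace when `d` is surjective. -/
def pmap2 (d : Fin K → Fin N) (u : Fin N → Fin K) :
    Matrix (Fin N) (Fin K × Fin N) F →ₗ[F] Matrix (Fin N) (Fin K × Fin N) F where
  toFun Z := Matrix.of fun a m => if a = d m.1 then Z a m - Z a (u a, m.2) else Z a m
  map_add' Z W := by
    funext a m
    by_cases h : a = d m.1 <;> simp [Matrix.add_apply, h] <;> ring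
  map_smul' c Z := by
    funext a m
    by_cases h : a = d m.1 <;> simp [Matrix.smul_apply, h, smul_eq_mul] <;> ring

@[simp] lemma pmap2_apply (d : Fin K → Fin N) (u : Fin N → Fin K)
    (Z : Matrix (Fin N) (Fin K × Fin N) F) (a : Fin N) (m : Fin K × Fin N) :
    pmap2 F d u Z a m = if a = d m.1 then Z a m - Z a (u a, m.2) else Z a m := rfl

variable (F) in
/-- Embedding whose range is the kernel of `pmap2`. -/
def emb2 (d : Fin K → Fin N) :
    ((Fin N × Fin N) → F) →ₗ[F] Matrix (Fin N) (Fin K × Fin N) F where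
  toFun Y := Matrix.of fun a m => if a = d m.1 then Y (a, m.2) else 0
  map_add' v w := by
    funext a m
    by_cases h : a = d m.1 <;> simp [Matrix.add_apply, h]
  map_smul' c v := by
    funext a m
    by_cases h : a = d m.1 <;> simp [Matrix.smul_apply, h]

@[simp] lemma emb2_apply (d : Fin K → Fin N) (Y : (Fin N × Fin N) → F) (a : Fin N)
    (m : Fin K × Fin N) : emb2 F d Y a m = if a = d m.1 then Y (a, m.2) else 0 := rfl

variable (F) in
/-- Column sums at the representative users `u a`. -/
def qmap (u : Fin N → Fin K) :
    Matrix (Fin N) (Fin K × Fin N) F →ₗ[F] ((Fin N × Fin N) → F) where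
  toFun Z x := ∑ b, Z b (u x.1, x.2)
  map_add' Z W := by
    funext x
    simp [Matrix.add_apply, Finset.sum_add_distrib]
  map_smul' c Z := by
    funext x
    simp [Matrix.smul_apply, smul_eq_mul, Finset.mul_sum]

@[simp] lemma qmap_apply (u : Fin N → Fin K) (Z : Matrix (Fin N) (Fin K × Fin N) F)
    (x : Fin N × Fin N) : qmap F u Z x = ∑ b, Z b (u x.1, x.2) := rfl

end Aux

theorem optLen_eq_CFL_KgtN (F : Type*) [Field F] [Fintype F] [DecidableEq F]
    (N K : ℕ) (hN : 1 ≤ N) (hK : N < K) (d : Fin K → Fin N) (δ : ℕ) :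
    (numDistinct d ≤ N - 1 →
      optLen F d δ = shortestCodeLen F (N * K * numDistinct d) (2 * δ + 1)) ∧
    (numDistinct d = N →
      optLen F d δ = shortestCodeLen F (N ^ 2 * (K - 1)) (2 * δ + 1)) := by
  classical
  constructor
  · intro hlt
    set S : Finset (Fin N) := Finset.univ.image d with hSdef
    have hnum : numDistinct d = S.card := rfl
    obtain ⟨b, hb⟩ : ∃ b : Fin N, b ∉ S := by
      by_contra h
      push_neg at h
      have hSu : S = Finset.univ := Finset.eq_univ_iff_forall.mpr h
      rw [hnum, hSu, Finset.card_univ, Fintype.card_fin] at hlt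
      omega
    have hcardD : Fintype.card ({a // a ∈ S} × (Fin K × Fin N)) = S.card * (K * N) := by
      simp
    have hp : ∀ Z, proj1 F S Z = 0 → ¬ InB d Z := by
      rintro Z hZ ⟨i, hsum, m, hm⟩
      have hdi : d i ∈ S := Finset.mem_image_of_mem d (Finset.mem_univ i)
      exact hm (congrFun hZ (⟨d i, hdi⟩, m))
    have hDp : Module.finrank F (({a // a ∈ S} × (Fin K × Fin N)) → F)
        = N * K * numDistinct d := by
      rw [Module.finrank_fintype_fun_eq_card, hcardD, hnum]
      ring
    have hinj : Function.Injective (emb1 F (K := K) S b) := by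
      intro v w h
      funext x
      obtain ⟨⟨a, ha⟩, m⟩ := x
      have h2 := congrFun (congrFun h a) m
      simpa [ha] using h2
    have hUr : Module.finrank F (LinearMap.range (emb1 F (K := K) S b)) = N * K * numDistinct d := by
      rw [LinearMap.finrank_range_of_inj hinj, Module.finrank_fintype_fun_eq_card, hcardD,
        hnum]
      ring
    have hUB : ∀ Z ∈ LinearMap.range (emb1 F (K := K) S b), Z ≠ 0 → InB d Z := by
      rintro Z ⟨v, rfl⟩ hZ
      have hv : v ≠ 0 := fun h => hZ (by rw [h, map_zero])
      obtain ⟨x, hx⟩ : ∃ x, v x ≠ 0 := by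
        by_contra h
        push_neg at h
        exact hv (funext h)
      obtain ⟨⟨a, ha⟩, m⟩ := x
      obtain ⟨i, -, hdi⟩ := Finset.mem_image.mp ha
      refine ⟨i, ?_, m, ?_⟩
      · intro j
        have h1 : ∑ a' ∈ S, emb1 F (K := K) S b v a' (i, j) = ∑ x : {a // a ∈ S}, v (x, (i, j)) := by
          rw [Finset.univ_eq_attach, ← Finset.sum_attach S (fun a' => emb1 F (K := K) S b v a' (i, j))]
          refine Finset.sum_congr rfl fun x _ => ?_
          simp [x.2]
        have h2 : ∑ a' ∈ Finset.univ \ S, emb1 F (K := K) S b v a' (i, j)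
            = -∑ x : {a // a ∈ S}, v (x, (i, j)) := by
          rw [Finset.sum_eq_single b]
          · simp [hb]
          · intro a' ha' hne
            have ha'S : a' ∉ S := (Finset.mem_sdiff.mp ha').2
            simp [ha'S, hne]
          · intro hbn
            exact absurd (Finset.mem_sdiff.mpr ⟨Finset.mem_univ b, hb⟩) hbn
        have hsplit := Finset.sum_sdiff (f := fun a' => emb1 F (K := K) S b v a' (i, j))
          (Finset.subset_univ S)
        rw [← hsplit, h1, h2, neg_add_cancel]
      · subst hdi
        simpa [ha] using hx
    exact optLen_eq_of_subspaces d δ (N * K * numDistinct d) _ hDp (proj1 F S) hp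
      (LinearMap.range (emb1 F (K := K) S b)) hUr hUB
  · intro heq
    obtain ⟨K', rfl⟩ : ∃ K', K = K' + 1 := ⟨K - 1, by omega⟩
    simp only [Nat.add_sub_cancel]
    have hsurj : Function.Surjective d := by
      intro a
      have hcard : (Finset.univ.image d).card = Fintype.card (Fin N) := by
        rw [Fintype.card_fin]; exact heq
      have hS : Finset.univ.image d = Finset.univ := Finset.eq_univ_of_card _ hcard
      have ha : a ∈ Finset.univ.image d := by rw [hS]; exact Finset.mem_univ a
      obtain ⟨i, -, hi⟩ := Finset.mem_image.mp ha
      exact ⟨i, hi⟩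
    set u : Fin N → Fin (K' + 1) := Function.surjInv hsurj with hudef
    have hu : ∀ a, d (u a) = a := fun a => Function.surjInv_eq hsurj a
    have huinj : Function.Injective u := Function.injective_surjInv hsurj
    have hM' : Module.finrank F (Matrix (Fin N) (Fin (K' + 1) × Fin N) F)
        = N ^ 2 * K' + N * N := by
      rw [Module.finrank_matrix]
      simp
      ring
    -- kernel of pmap2 is the range of emb2
    have hker2 : LinearMap.ker (pmap2 F d u) = LinearMap.range (emb2 F (K := K' + 1) d) := by
      ext Z
      simp only [LinearMap.mem_ker, LinearMap.mem_range]
      constructor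
      · intro hZ
        refine ⟨fun x => Z x.1 (u x.1, x.2), ?_⟩
        funext a m
        have hza : pmap2 F d u Z a m = 0 := by
          have := congrFun (congrFun hZ a) m
          simpa using this
        by_cases h : a = d m.1
        · rw [emb2_apply, if_pos h]
          have hsub : Z a m - Z a (u a, m.2) = 0 := by
            rw [pmap2_apply, if_pos h] at hza
            exact hza
          exact (sub_eq_zero.mp hsub).symm
        · rw [emb2_apply, if_neg h]
          rw [pmap2_apply, if_neg h] at hza
          exact hza.symm
      · rintro ⟨Y, rfl⟩
        funext a m
        by_cases h : a = d m.1
        · subst h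
          simp [hu]
        · simp [h]
    have hinj2 : Function.Injective (emb2 F (K := K' + 1) d) := by
      intro Y Y' h
      funext x
      obtain ⟨a, j⟩ := x
      have h2 := congrFun (congrFun h a) (u a, j)
      simpa [hu a] using h2
    have hkerrank : Module.finrank F (LinearMap.ker (pmap2 F d u)) = N * N := by
      rw [hker2, LinearMap.finrank_range_of_inj hinj2, Module.finrank_fintype_fun_eq_card]
      simp
    have hrn := LinearMap.finrank_range_add_finrank_ker (pmap2 F d u)
    rw [hkerrank, hM'] at hrn
    have hDp2 : Module.finrank F (LinearMap.range (pmap2 F d u)) = N ^ 2 * K' :=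
      Nat.add_right_cancel hrn
    have hp0 : ∀ Z, pmap2 F d u Z = 0 → ¬ InB d Z := by
      rintro Z hZ ⟨i, hsum, m, hm⟩
      have hz : ∀ a (m' : Fin (K' + 1) × Fin N), pmap2 F d u Z a m' = 0 := by
        intro a m'
        have := congrFun (congrFun hZ a) m'
        simpa using this
      have hoff : ∀ a (m' : Fin (K' + 1) × Fin N), a ≠ d m'.1 → Z a m' = 0 := by
        intro a m' h
        have h2 := hz a m'
        rwa [pmap2_apply, if_neg h] at h2
      have hon : ∀ a (m' : Fin (K' + 1) × Fin N), a = d m'.1 → Z a m' = Z a (u a, m'.2) := by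
        intro a m' h
        have h2 := hz a m'
        rw [pmap2_apply, if_pos h] at h2
        exact sub_eq_zero.mp h2
      by_cases hcase : d i = d m.1
      · have h1 : ∀ j, Z (d i) (i, j) = 0 := by
          intro j
          have hs : ∑ a, Z a (i, j) = Z (d i) (i, j) :=
            Finset.sum_eq_single _ (fun a _ hne => hoff a (i, j) hne)
              (fun h => absurd (Finset.mem_univ _) h)
          rw [← hs]
          exact hsum j
        have h2 : Z (d i) (u (d i), m.2) = 0 := by
          have h3 := hon (d i) (i, m.2) rfl
          rw [← h3]
          exact h1 m.2
        exact hm ((hon (d i) m hcase).trans h2)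
      · exact hm (hoff _ _ hcase)
    have hp : ∀ Z, (pmap2 F d u).rangeRestrict Z = 0 → ¬ InB d Z := by
      intro Z h
      exact hp0 Z (congrArg Subtype.val h)
    -- the subspace U : kernel of qmap
    have hb0 : 0 < N := hN
    have hqsurj : Function.Surjective (qmap F (K := K' + 1) u) := by
      intro w
      refine ⟨fun b m => if b = (⟨0, hb0⟩ : Fin N) then
        (∑ a, if u a = m.1 then w (a, m.2) else 0) else 0, ?_⟩
      funext x
      obtain ⟨a, j⟩ := x
      show ∑ b : Fin N, _ = _
      rw [Finset.sum_eq_single (⟨0, hb0⟩ : Fin N)]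
      · simp [huinj.eq_iff]
      · intro b _ hneb
        simp [hneb]
      · intro h
        exact absurd (Finset.mem_univ _) h
    have hq1 : Module.finrank F (LinearMap.range (qmap F (K := K' + 1) u)) = N * N := by
      rw [LinearMap.range_eq_top.mpr hqsurj, finrank_top, Module.finrank_fintype_fun_eq_card]
      simp
    have hrnq := LinearMap.finrank_range_add_finrank_ker (qmap F (K := K' + 1) u)
    rw [hq1, hM'] at hrnq
    have hUr2 : Module.finrank F (LinearMap.ker (qmap F (K := K' + 1) u)) = N ^ 2 * K' := by
      have hcomm : N ^ 2 * K' + N * N = N * N + N ^ 2 * K' := Nat.add_comm _ _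
      rw [hcomm] at hrnq
      exact Nat.add_left_cancel hrnq
    have hUB2 : ∀ Z ∈ LinearMap.ker (qmap F (K := K' + 1) u), Z ≠ 0 → InB d Z := by
      intro Z hZker hZne
      obtain ⟨a0, m0, hZ0⟩ : ∃ a0 m0, Z a0 m0 ≠ 0 := by
        by_contra h
        push_neg at h
        exact hZne (funext fun a => funext fun m => h a m)
      refine ⟨u a0, ?_, m0, ?_⟩
      · intro j
        have := congrFun (LinearMap.mem_ker.mp hZker) (a0, j)
        simpa using this
      · rw [hu a0]
        exact hZ0
    exact optLen_eq_of_subspaces d δ (N ^ 2 * K') _ hDp2 (pmap2 F d u).rangeRestrict hp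
      (LinearMap.ker (qmap F (K := K' + 1) u)) hUr2 hUB2
end

section
/- For all integers N ≥ 1, K > N and every integer δ ≥ 0, the maximum over all demands d : [K] → [N] of the smallest length of a linear δ-error-correcting delivery code for I(M_CFL, d) equals N_q[N²(K−1), 2δ+1], and this maximum is attained when d is surjective. -/
open Matrix

set_option linter.unusedSectionVars false

section Aux

variable {F : Type*} [Field F] [DecidableEq F] {N K : ℕ}

/-- The "confusable" messages. -/
def BadMsg (d : Fin K → Fin N) (Z : Matrix (Fin N) (Fin K × Fin N) F) : Prop :=
  ∃ i : Fin K, (∀ j, ∑ a, Z a (i, j) = 0) ∧ ∃ m, Z (d i) m ≠ 0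

lemma bad_weight {d : Fin K → Fin N} {δ ℓ : ℕ}
    {E : Matrix (Fin N) (Fin K × Fin N) F →ₗ[F] (Fin ℓ → F)}
    (hE : IsECDeliveryCode F d δ ℓ E) {Z : Matrix (Fin N) (Fin K × Fin N) F}
    (hZ : BadMsg d Z) : 2 * δ + 1 ≤ hammingNorm (E Z) := by
  classical
  obtain ⟨i, hS, m, hm⟩ := hZ
  by_contra hlt
  push_neg at hlt
  have hw : hammingNorm (E Z) ≤ 2 * δ := by omega
  obtain ⟨Dec, hDec⟩ := hE i m
  set S : Finset (Fin ℓ) := Finset.univ.filter (fun k => E Z k ≠ 0) with hSdef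
  have hScard : S.card ≤ 2 * δ := by
    simpa [hammingNorm, hSdef] using hw
  obtain ⟨S₁, hS₁sub, hS₁card⟩ := Finset.exists_subset_card_eq
    (min_le_right δ S.card)
  set y : Fin ℓ → F := fun k => if k ∈ S₁ then E Z k else 0 with hydef
  have h0 : hammingDist y (E 0) ≤ δ := by
    rw [map_zero, hammingDist_zero_right]
    have hsub : Finset.univ.filter (fun k => y k ≠ 0) ⊆ S₁ := by
      intro k hk
      simp only [Finset.mem_filter, hydef] at hk
      by_contra hk1
      exact hk.2 (by simp [hk1])
    calc (Finset.univ.filter (fun k => y k ≠ 0)).card ≤ S₁.card :=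
          Finset.card_le_card hsub
      _ ≤ δ := by omega
  have h1 : hammingDist y (E Z) ≤ δ := by
    have hsub : Finset.univ.filter (fun k => y k ≠ E Z k) ⊆ S \ S₁ := by
      intro k hk
      simp only [Finset.mem_filter, hydef] at hk
      by_cases hk1 : k ∈ S₁
      · simp [hk1] at hk
      · refine Finset.mem_sdiff.2 ⟨?_, hk1⟩
        simp only [hSdef, Finset.mem_filter, Finset.mem_univ, true_and]
        intro h0'
        exact hk.2 (by simp [hk1, h0'])
    have hcard : (S \ S₁).card = S.card - min δ S.card := by
      rw [Finset.card_sdiff_of_subset hS₁sub, hS₁card]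
    calc (Finset.univ.filter (fun k => y k ≠ E Z k)).card ≤ (S \ S₁).card :=
          Finset.card_le_card hsub
      _ ≤ δ := by omega
  have e0 := hDec 0 y h0
  have e1 := hDec Z y h1
  have hside : (fun j => ∑ a, (0 : Matrix (Fin N) (Fin K × Fin N) F) a (i, j))
      = (fun j => ∑ a, Z a (i, j)) := by
    funext j
    simp [hS j]
  rw [hside] at e0
  rw [e1] at e0
  simp at e0
  exact hm e0

lemma isEC_of_weight {d : Fin K → Fin N} {δ ℓ : ℕ}
    {E : Matrix (Fin N) (Fin K × Fin N) F →ₗ[F] (Fin ℓ → F)}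
    (h : ∀ Z, BadMsg d Z → 2 * δ + 1 ≤ hammingNorm (E Z)) :
    IsECDeliveryCode F d δ ℓ E := by
  classical
  intro i m
  refine ⟨fun y s =>
    if h' : ∃ X : Matrix (Fin N) (Fin K × Fin N) F,
        hammingDist y (E X) ≤ δ ∧ (fun j => ∑ a, X a (i, j)) = s
    then h'.choose (d i) m else 0, ?_⟩
  intro X y hy
  have hex : ∃ X' : Matrix (Fin N) (Fin K × Fin N) F,
      hammingDist y (E X') ≤ δ ∧
        (fun j => ∑ a, X' a (i, j)) = (fun j => ∑ a, X a (i, j)) := ⟨X, hy, rfl⟩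
  beta_reduce
  rw [dif_pos hex]
  obtain ⟨h1, h2⟩ := hex.choose_spec
  by_contra hne
  have hbad : BadMsg d (hex.choose - X) := by
    refine ⟨i, fun j => ?_, m, ?_⟩
    · have h2j := congrFun h2 j
      simp only [Matrix.sub_apply, Finset.sum_sub_distrib]
      rw [h2j, sub_self]
    · simpa [Matrix.sub_apply, sub_ne_zero] using hne
  have hW := h _ hbad
  have hle : hammingNorm (E (hex.choose - X)) ≤ 2 * δ := by
    rw [map_sub, sub_eq_neg_add, ← hammingDist_eq_hammingNorm, hammingDist_comm]
    calc hammingDist (E hex.choose) (E X)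
        ≤ hammingDist (E hex.choose) y + hammingDist y (E X) :=
          hammingDist_triangle _ _ _
      _ ≤ δ + δ := by
          refine Nat.add_le_add ?_ hy
          rw [hammingDist_comm]; exact h1
      _ = 2 * δ := by omega
  omega

end Aux

section Aux2

variable {F : Type*} [Field F] [DecidableEq F] {N K : ℕ}

/-- An "avoiding" subspace of dimension `N^2`: no bad message lies in it. -/
lemma exists_avoiding (d : Fin K → Fin N) (hK : N < K) :
    ∃ V : Submodule F (Matrix (Fin N) (Fin K × Fin N) F),
      Module.finrank F V = N ^ 2 ∧ ∀ Z ∈ V, ¬ BadMsg d Z := by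
  classical
  have hrankdom : Module.finrank F ((Fin N × Fin N) → F) = N ^ 2 := by
    rw [Module.finrank_pi]
    simp [sq]
  by_cases hs : Function.Surjective d
  · let Φ : ((Fin N × Fin N) → F) →ₗ[F] Matrix (Fin N) (Fin K × Fin N) F :=
      { toFun := fun W => Matrix.of fun a p => if a = d p.1 then W (a, p.2) else 0
        map_add' := by
          intro v w; ext a p
          simp only [Matrix.of_apply, Matrix.add_apply, Pi.add_apply]
          split <;> simp
        map_smul' := by
          intro c v; ext a p
          simp only [Matrix.of_apply, Matrix.smul_apply, Pi.smul_apply, RingHom.id_apply]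
          split <;> simp }
    have hinj : Function.Injective Φ := by
      rw [injective_iff_map_eq_zero]
      intro W hW
      funext p
      obtain ⟨i, hi⟩ := hs p.1
      have := congrFun (congrFun hW p.1) (i, p.2)
      simpa [Φ, hi] using this
    refine ⟨LinearMap.range Φ, ?_, ?_⟩
    · rw [LinearMap.finrank_range_of_inj hinj, hrankdom]
    · rintro Z ⟨W, rfl⟩ ⟨i, hcol, m, hm⟩
      have hWz : ∀ j, W (d i, j) = 0 := by
        intro j
        have := hcol j
        simpa [Φ, Finset.sum_ite_eq'] using this
      apply hm
      show (if d i = d m.1 then W (d i, m.2) else 0) = 0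
      split
      · exact hWz m.2
      · rfl
  · simp only [Function.Surjective, not_forall, not_exists] at hs
    obtain ⟨b₀, hb₀⟩ := hs
    let Φ : ((Fin N × Fin N) → F) →ₗ[F] Matrix (Fin N) (Fin K × Fin N) F :=
      { toFun := fun W => Matrix.of fun a p =>
          if h : (p.1 : ℕ) < N then (if a = b₀ then W (⟨(p.1 : ℕ), h⟩, p.2) else 0) else 0
        map_add' := by
          intro v w; ext a p
          simp only [Matrix.of_apply, Matrix.add_apply, Pi.add_apply]
          split
          · split <;> simp
          · simp
        map_smul' := by
          intro c v; ext a p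
          simp only [Matrix.of_apply, Matrix.smul_apply, Pi.smul_apply, RingHom.id_apply]
          split
          · split <;> simp
          · simp }
    have hinj : Function.Injective Φ := by
      rw [injective_iff_map_eq_zero]
      intro W hW
      funext p
      have hlt : ((⟨(p.1 : ℕ), lt_trans p.1.2 hK⟩ : Fin K) : ℕ) < N := p.1.2
      have := congrFun (congrFun hW b₀) (⟨(p.1 : ℕ), lt_trans p.1.2 hK⟩, p.2)
      simpa [Φ, hlt] using this
    refine ⟨LinearMap.range Φ, ?_, ?_⟩
    · rw [LinearMap.finrank_range_of_inj hinj, hrankdom]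
    · rintro Z ⟨W, rfl⟩ ⟨i, hcol, m, hm⟩
      apply hm
      show (if h : ((m.1 : Fin K) : ℕ) < N then
        (if d i = b₀ then W (⟨(m.1 : ℕ), h⟩, m.2) else 0) else 0) = 0
      simp [hb₀ i]

end Aux2

section Aux3

variable {F : Type*} [Field F] [DecidableEq F] {N K : ℕ}

/-- Repetition code: the set defining `shortestCodeLen` is nonempty. -/
lemma rep_code (k D : ℕ) (hD : 0 < D) :
    ∃ C : Submodule F (Fin (k * D) → F), Module.finrank F C = k ∧
      ∀ x ∈ C, ∀ y ∈ C, x ≠ y → D ≤ hammingDist x y := by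
  classical
  let ρ : (Fin k → F) →ₗ[F] (Fin (k * D) → F) :=
    { toFun := fun v t => v (finProdFinEquiv.symm t).1
      map_add' := fun v w => rfl
      map_smul' := fun c v => rfl }
  have happ : ∀ (v : Fin k → F) (a : Fin k) (s : Fin D),
      ρ v (finProdFinEquiv (a, s)) = v a := by
    intro v a s
    show v (finProdFinEquiv.symm (finProdFinEquiv (a, s))).1 = v a
    rw [Equiv.symm_apply_apply]
  have hinj : Function.Injective ρ := by
    intro v w hvw
    funext a
    have := congrFun hvw (finProdFinEquiv (a, ⟨0, hD⟩))
    rwa [happ, happ] at this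
  refine ⟨LinearMap.range ρ, ?_, ?_⟩
  · rw [LinearMap.finrank_range_of_inj hinj, Module.finrank_pi]
    simp
  · rintro x ⟨v, rfl⟩ y ⟨w, rfl⟩ hxy
    have hvw : v ≠ w := fun h => hxy (by rw [h])
    obtain ⟨a, ha⟩ : ∃ a, v a ≠ w a := by
      by_contra hc
      push_neg at hc
      exact hvw (funext hc)
    have hkey : ∀ s : Fin D, ρ v (finProdFinEquiv (a, s)) ≠ ρ w (finProdFinEquiv (a, s)) := by
      intro s
      rw [happ, happ]
      exact ha
    have hminj : Function.Injective (fun s : Fin D => finProdFinEquiv (a, s)) := by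
      intro s₁ s₂ h
      have := finProdFinEquiv.injective h
      exact (Prod.mk.injEq _ _ _ _ ▸ this).2
    calc D = (Finset.univ.image (fun s : Fin D => finProdFinEquiv (a, s))).card := by
          rw [Finset.card_image_of_injective _ hminj, Finset.card_univ, Fintype.card_fin]
      _ ≤ hammingDist (ρ v) (ρ w) := by
          unfold hammingDist
          apply Finset.card_le_card
          intro t ht
          simp only [Finset.mem_image] at ht
          obtain ⟨s, _, rfl⟩ := ht
          simp only [Finset.mem_filter, Finset.mem_univ, true_and]
          exact hkey s

lemma finrank_msg : Module.finrank F (Matrix (Fin N) (Fin K × Fin N) F) = N ^ 2 * K := by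
  rw [Module.finrank_matrix]
  simp [Fintype.card_prod]
  ring

/-- Existence of a valid delivery code of any admissible code length. -/
lemma exists_delivery (d : Fin K → Fin N) (hK : N < K) {δ n : ℕ}
    (C : Submodule F (Fin n → F)) (hC : Module.finrank F C = N ^ 2 * (K - 1))
    (hdist : ∀ x ∈ C, ∀ y ∈ C, x ≠ y → 2 * δ + 1 ≤ hammingDist x y) :
    ∃ E : Matrix (Fin N) (Fin K × Fin N) F →ₗ[F] (Fin n → F),
      IsECDeliveryCode F d δ n E := by
  classical
  obtain ⟨V, hVrank, hVavoid⟩ := exists_avoiding (F := F) d hK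
  obtain ⟨W, hW⟩ := Submodule.exists_isCompl V
  obtain ⟨K', rfl⟩ : ∃ K', K = K' + 1 := ⟨K - 1, by omega⟩
  have hsum := Submodule.finrank_add_eq_of_isCompl hW
  rw [hVrank, finrank_msg] at hsum
  have hWrank : Module.finrank F W = N ^ 2 * (K' + 1 - 1) := by
    have hexp : N ^ 2 * (K' + 1) = N ^ 2 + N ^ 2 * K' := by ring
    rw [hexp] at hsum
    simpa using Nat.add_left_cancel hsum
  have hiso : Module.finrank F W = Module.finrank F C := by rw [hWrank, hC]
  let φ : W ≃ₗ[F] C := LinearEquiv.ofFinrankEq _ _ hiso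
  let π : Matrix (Fin N) (Fin (K' + 1) × Fin N) F →ₗ[F] W :=
    W.linearProjOfIsCompl V hW.symm
  refine ⟨C.subtype ∘ₗ φ.toLinearMap ∘ₗ π, isEC_of_weight ?_⟩
  intro Z hbad
  have hπ : π Z ≠ 0 := by
    intro h0
    exact hVavoid Z ((Submodule.linearProjOfIsCompl_apply_eq_zero_iff hW.symm).1 h0) hbad
  have hφ : φ (π Z) ≠ 0 := fun h => hπ (by simpa using φ.map_eq_zero_iff.1 h)
  have hne : ((φ (π Z) : Fin n → F)) ≠ 0 := by
    intro h
    exact hφ (Subtype.ext h)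
  have := hdist _ (φ (π Z)).2 0 C.zero_mem hne
  rw [hammingDist_zero_right] at this
  exact this

end Aux3

section Aux4

variable {F : Type*} [Field F] [DecidableEq F] {N K : ℕ}

/-- Lower bound ingredient: from a valid delivery code for a surjective demand,
produce a linear code of dimension `N^2 * (K-1)` and minimum distance `2δ+1`. -/
lemma code_of_delivery (d : Fin K → Fin N) (hN : 1 ≤ N) (hK : N < K)
    (hd : Function.Surjective d) {δ ℓ : ℕ}
    {E : Matrix (Fin N) (Fin K × Fin N) F →ₗ[F] (Fin ℓ → F)}
    (hE : IsECDeliveryCode F d δ ℓ E) :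
    ∃ C : Submodule F (Fin ℓ → F), Module.finrank F C = N ^ 2 * (K - 1) ∧
      ∀ x ∈ C, ∀ y ∈ C, x ≠ y → 2 * δ + 1 ≤ hammingDist x y := by
  classical
  set g : Fin N → Fin K := Function.surjInv hd with hg
  have hdg : ∀ a, d (g a) = a := fun a => Function.surjInv_eq hd a
  let ψ : Matrix (Fin N) (Fin K × Fin N) F →ₗ[F] ((Fin N × Fin N) → F) :=
    { toFun := fun Z p => ∑ b, Z b (g p.1, p.2)
      map_add' := by
        intro Y Z; funext p
        simp [Matrix.add_apply, Finset.sum_add_distrib]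
      map_smul' := by
        intro c Z; funext p
        simp [Matrix.smul_apply, Finset.mul_sum] }
  set U : Submodule F (Matrix (Fin N) (Fin K × Fin N) F) := LinearMap.ker ψ with hU
  -- every nonzero element of U is bad
  have hUbad : ∀ Z ∈ U, Z ≠ 0 → BadMsg d Z := by
    intro Z hZ hZ0
    obtain ⟨a, m, ham⟩ : ∃ a m, Z a m ≠ 0 := by
      by_contra hc
      push_neg at hc
      exact hZ0 (by ext a m; simp [hc])
    refine ⟨g a, fun j => ?_, m, by rwa [hdg]⟩
    have := congrFun (LinearMap.mem_ker.1 hZ) (a, j)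
    simpa [ψ] using this
  -- ψ is surjective
  have hψsurj : Function.Surjective ψ := by
    intro t
    let b₁ : Fin N := ⟨0, by omega⟩
    refine ⟨Matrix.of fun b p =>
      if g (d p.1) = p.1 ∧ b = b₁ then t (d p.1, p.2) else 0, ?_⟩
    funext p
    have hga : d (g p.1) = p.1 := hdg p.1
    show (∑ b, if g (d (g p.1)) = g p.1 ∧ b = b₁ then t (d (g p.1), p.2) else 0) = t p
    rw [Finset.sum_congr rfl (fun b _ => by rw [hga])]
    simp [Finset.sum_ite_eq']
  -- finrank of U
  have hUrank : Module.finrank F U = N ^ 2 * (K - 1) := by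
    obtain ⟨K', rfl⟩ : ∃ K', K = K' + 1 := ⟨K - 1, by omega⟩
    have hrn := LinearMap.finrank_range_add_finrank_ker ψ
    rw [LinearMap.range_eq_top.2 hψsurj, finrank_top, Module.finrank_pi,
      finrank_msg] at hrn
    simp only [Fintype.card_prod, Fintype.card_fin] at hrn
    have hexp : N ^ 2 * (K' + 1) = N * N + N ^ 2 * K' := by ring
    rw [hexp] at hrn
    have := Nat.add_left_cancel hrn
    simpa [hU] using this
  -- E is injective on U
  have hinj : Function.Injective (E ∘ₗ U.subtype) := by
    rw [injective_iff_map_eq_zero]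
    intro z hz
    by_contra hz0
    have hzz : (z : Matrix (Fin N) (Fin K × Fin N) F) ≠ 0 := by
      intro h
      exact hz0 (Subtype.ext h)
    have := bad_weight hE (hUbad z z.2 hzz)
    rw [show E (z : Matrix (Fin N) (Fin K × Fin N) F) = 0 from hz] at this
    simp [hammingNorm] at this
  refine ⟨U.map E, ?_, ?_⟩
  · have hrange : LinearMap.range (E ∘ₗ U.subtype) = U.map E := by
      rw [LinearMap.range_comp, Submodule.range_subtype]
    rw [← hrange, LinearMap.finrank_range_of_inj hinj, hUrank]
  · rintro x ⟨Z₁, hZ₁, rfl⟩ y ⟨Z₂, hZ₂, rfl⟩ hxy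
    have hZne : Z₁ - Z₂ ≠ 0 := by
      intro h
      exact hxy (by rw [sub_eq_zero] at h; rw [h])
    have hbad := hUbad _ (sub_mem hZ₁ hZ₂) hZne
    have := bad_weight hE hbad
    rwa [map_sub, sub_eq_neg_add, ← hammingDist_eq_hammingNorm, hammingDist_comm] at this

end Aux4


theorem optLen_worst_CFL_KgtN (F : Type*) [Field F] [Fintype F] [DecidableEq F]
    (N K : ℕ) (hN : 1 ≤ N) (hK : N < K) (δ : ℕ) :
    (⨆ d : Fin K → Fin N, optLen F d δ) =
      shortestCodeLen F (N ^ 2 * (K - 1)) (2 * δ + 1) ∧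
    ∀ d : Fin K → Fin N, Function.Surjective d →
      optLen F d δ = shortestCodeLen F (N ^ 2 * (K - 1)) (2 * δ + 1) := by
  classical
  set k₀ : ℕ := N ^ 2 * (K - 1) with hk₀
  set D : ℕ := 2 * δ + 1 with hD
  set codeSet : Set ℕ := { n | ∃ C : Submodule F (Fin n → F),
    Module.finrank F C = k₀ ∧ ∀ x ∈ C, ∀ y ∈ C, x ≠ y → D ≤ hammingDist x y } with hcs
  have hcsne : codeSet.Nonempty := by
    obtain ⟨C, hC1, hC2⟩ := rep_code (F := F) k₀ D (by omega)
    exact ⟨k₀ * D, C, hC1, hC2⟩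
  have hLdef : shortestCodeLen F k₀ D = sInf codeSet := rfl
  have hLmem : sInf codeSet ∈ codeSet := Nat.sInf_mem hcsne
  obtain ⟨C, hC1, hC2⟩ := hLmem
  -- upper bound for every demand
  have hub : ∀ d : Fin K → Fin N, optLen F d δ ≤ shortestCodeLen F k₀ D := by
    intro d
    obtain ⟨E, hE⟩ := exists_delivery (δ := δ) d hK C hC1 hC2
    rw [hLdef]
    exact Nat.sInf_le ⟨E, hE⟩
  -- equality for surjective demands
  have hsurj_eq : ∀ d : Fin K → Fin N, Function.Surjective d →
      optLen F d δ = shortestCodeLen F k₀ D := by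
    intro d hd
    refine le_antisymm (hub d) ?_
    have hne : { ℓ | ∃ E : Matrix (Fin N) (Fin K × Fin N) F →ₗ[F] (Fin ℓ → F),
        IsECDeliveryCode F d δ ℓ E }.Nonempty := by
      obtain ⟨E, hE⟩ := exists_delivery (δ := δ) d hK C hC1 hC2
      exact ⟨sInf codeSet, E, hE⟩
    obtain ⟨E, hE⟩ := Nat.sInf_mem hne
    obtain ⟨C', hC'1, hC'2⟩ := code_of_delivery d hN hK hd hE
    rw [hLdef]
    exact Nat.sInf_le ⟨C', hC'1, hC'2⟩
  -- a surjective demand exists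
  have hd₀ : ∃ d₀ : Fin K → Fin N, Function.Surjective d₀ := by
    refine ⟨fun i => ⟨(i : ℕ) % N, Nat.mod_lt _ (by omega)⟩, ?_⟩
    intro a
    refine ⟨⟨(a : ℕ), lt_trans a.2 hK⟩, ?_⟩
    ext
    simp [Nat.mod_eq_of_lt a.2]
  obtain ⟨d₀, hd₀s⟩ := hd₀
  haveI : Nonempty (Fin N) := ⟨⟨0, by omega⟩⟩
  constructor
  · refine le_antisymm ?_ ?_
    · exact ciSup_le fun d => hub d
    · rw [← hsurj_eq d₀ hd₀s]
      exact le_ciSup (Set.Finite.bddAbove (Set.finite_range (fun d : Fin K → Fin N => optLen F d δ))) d₀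
  · exact hsurj_eq
end
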